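/- arXiv:0707.3715 — 5 statements merged into one kernel-verified Lean document; each statement's English description precedes it below -/
import Mathlib

section
/- Consider the stochastic linear regression X_{k+1} = θφ_k + ε_{k+1}, where (φ_n)_{n≥0} are i.i.d. real random variables, (ε_n)_{n≥1} are identically distributed real random variables with mean zero and variance σ² > 0, and for each n ≥ 0 the variable ε_{n+1} is independent of F_n = σ(φ_0, ε_1, …, φ_{n−1}, ε_n). Let θ̂_n = (Σ_{k=1}^n φ_{k−1}X_k)/(Σ_{k=1}^n φ_{k−1}²) be the least-squares estimator. Assume the cumulant generating function L(t) = log E[exp(tε_1²)] is finite on an interval [0, c] with c > 0, let I(x) = sup_{0≤t≤c}{ xt − L(t) }, and let H(t) = log E[exp(tφ_0²)]. Then for all n ≥ 1, x > 0, y > 0 and every p > 1, P(|θ̂_n − θ| ≥ x) ≤ 2 exp( (n/p) H( −(p−1)x²/(2σ²(1+y)) ) ) + exp( −n I(σ²y/n) ). -/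
open MeasureTheory ProbabilityTheory Real Finset

open scoped ENNReal NNReal

private lemma indepFun_of_indep {Ω : Type*} {m0 : MeasurableSpace Ω} {μ : Measure Ω}
    {m1 m2 : MeasurableSpace Ω} (h : ProbabilityTheory.Indep m1 m2 μ)
    {f g : Ω → ℝ} (hf : Measurable[m1] f) (hg : Measurable[m2] g) :
    IndepFun f g μ := by
  rw [indepFun_iff_measure_inter_preimage_eq_mul]
  intro s t hs ht
  exact (ProbabilityTheory.Indep_iff _ _ _).1 h _ _ (hf hs) (hg ht)

private lemma integrable_exp_nonpos_mul {Ω : Type*} {m0 : MeasurableSpace Ω} {μ : Measure Ω}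
    [IsProbabilityMeasure μ] {g : Ω → ℝ} (hg : Measurable g) (hg0 : ∀ ω, 0 ≤ g ω)
    {t : ℝ} (ht : t ≤ 0) : Integrable (fun ω => Real.exp (t * g ω)) μ := by
  refine Integrable.mono' (integrable_const 1) ((hg.const_mul t).exp).aestronglyMeasurable
    (Filter.Eventually.of_forall fun ω => ?_)
  rw [Real.norm_eq_abs, abs_of_pos (Real.exp_pos _)]
  exact Real.exp_le_one_iff.2 (mul_nonpos_iff.2 (Or.inr ⟨ht, hg0 ω⟩))

private lemma exp_holder {Ω : Type*} {m0 : MeasurableSpace Ω} {μ : Measure Ω}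
    [IsProbabilityMeasure μ] {f : Ω → ℝ} (hf : Measurable f) (hf0 : ∀ ω, 0 ≤ f ω)
    {t p : ℝ} (ht : t ≤ 0) (hp : 1 < p) :
    ∫ ω, Real.exp (t / p * f ω) ∂μ ≤ (∫ ω, Real.exp (t * f ω) ∂μ) ^ (1 / p) := by
  have hp0 : (0:ℝ) < p := lt_trans one_pos hp
  have hq : p.HolderConjugate (p / (p - 1)) :=
    (Real.holderConjugate_iff_eq_conjExponent hp).2 rfl
  have htp : t / p ≤ 0 := div_nonpos_iff.2 (Or.inr ⟨ht, hp0.le⟩)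
  set F : Ω → ℝ≥0∞ := fun ω => ENNReal.ofReal (Real.exp (t / p * f ω)) with hF
  set G : Ω → ℝ≥0∞ := fun ω => ENNReal.ofReal (Real.exp (t * f ω)) with hG
  have hFmeas : AEMeasurable F μ :=
    (ENNReal.measurable_ofReal.comp ((hf.const_mul _).exp)).aemeasurable
  have key := ENNReal.lintegral_mul_le_Lp_mul_Lq μ hq hFmeas
    (aemeasurable_const (b := (1:ℝ≥0∞)))
  simp only [Pi.mul_apply, mul_one, ENNReal.one_rpow, lintegral_one, measure_univ] at key
  have hFp : ∀ ω, F ω ^ p = G ω := by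
    intro ω
    show ENNReal.ofReal (Real.exp (t / p * f ω)) ^ p = ENNReal.ofReal (Real.exp (t * f ω))
    rw [ENNReal.ofReal_rpow_of_nonneg (Real.exp_pos _).le hp0.le, ← Real.exp_mul]
    congr 2
    field_simp
  simp only [hFp] at key
  have hGle : (∫⁻ ω, G ω ∂μ) ≤ 1 := by
    calc (∫⁻ ω, G ω ∂μ) ≤ ∫⁻ _, 1 ∂μ := by
          refine lintegral_mono fun ω => ?_
          rw [hG]
          exact ENNReal.ofReal_le_one.2 (Real.exp_le_one_iff.2
            (mul_nonpos_iff.2 (Or.inr ⟨ht, hf0 ω⟩)))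
      _ = 1 := by simp
  have hFint : ∫ ω, Real.exp (t / p * f ω) ∂μ = (∫⁻ ω, F ω ∂μ).toReal :=
    integral_eq_lintegral_of_nonneg_ae (Filter.Eventually.of_forall fun ω => (Real.exp_pos _).le)
      ((hf.const_mul _).exp).aestronglyMeasurable
  have hGint : ∫ ω, Real.exp (t * f ω) ∂μ = (∫⁻ ω, G ω ∂μ).toReal :=
    integral_eq_lintegral_of_nonneg_ae (Filter.Eventually.of_forall fun ω => (Real.exp_pos _).le)
      ((hf.const_mul _).exp).aestronglyMeasurable
  rw [hFint, hGint]
  have hGtop : (∫⁻ ω, G ω ∂μ) ^ (1 / p) ≠ ⊤ :=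
    (ENNReal.rpow_lt_top_of_nonneg (by positivity)
      (lt_of_le_of_lt hGle ENNReal.one_lt_top).ne).ne
  calc (∫⁻ ω, F ω ∂μ).toReal ≤ ((∫⁻ ω, G ω ∂μ) ^ (1 / p)).toReal :=
        ENNReal.toReal_mono hGtop key
    _ = (∫⁻ ω, G ω ∂μ).toReal ^ (1 / p) := by rw [ENNReal.toReal_rpow]

/-- Corollary 5.1: exponential inequality for the least-squares estimator in the stochastic
linear regression `X_{k+1} = θ φ_k + ε_{k+1}`. For all `n ≥ 1`, `x, y > 0` and every `p > 1`,
`P(|θ̂_n − θ| ≥ x) ≤ 2 exp((n/p) H(−(p−1)x²/(2σ²(1+y)))) + exp(−n I(σ²y/n))`. -/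
theorem linear_regression_least_squares_exponential_inequality
    {Ω : Type*} {m0 : MeasurableSpace Ω} {μ : Measure Ω} [IsProbabilityMeasure μ]
    (θ : ℝ) (φ ε X : ℕ → Ω → ℝ)
    (hφmeas : ∀ k, Measurable (φ k)) (hεmeas : ∀ k, Measurable (ε k))
    -- the regression variables (φ_n) are i.i.d.
    (hφindep : iIndepFun φ μ)
    (hφident : ∀ k, IdentDistrib (φ k) (φ 0) μ μ)
    -- the noise (ε_n)_{n ≥ 1} is identically distributed with mean zero and variance σ² > 0
    (hεident : ∀ k, 1 ≤ k → IdentDistrib (ε k) (ε 1) μ μ)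
    {σ2 : ℝ} (hσ2 : 0 < σ2) (hεsq : MemLp (ε 1) 2 μ)
    (hεmean : ∫ ω, ε 1 ω ∂μ = 0) (hεvar : ∫ ω, (ε 1 ω) ^ 2 ∂μ = σ2)
    -- ε_{n+1} is independent of F_n = σ(φ_0, ε_1, …, φ_{n−1}, ε_n)
    (hindep : ∀ n : ℕ, Indep (MeasurableSpace.comap (ε (n + 1)) inferInstance)
      (⨆ k ∈ Finset.range n, (MeasurableSpace.comap (φ k) inferInstance ⊔
        MeasurableSpace.comap (ε (k + 1)) inferInstance)) μ)
    -- the regression model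
    (hX : ∀ k : ℕ, ∀ ω, X (k + 1) ω = θ * φ k ω + ε (k + 1) ω)
    -- the cumulant generating function `L` of `ε₁²` is finite on `[0, c]`, `c > 0`
    {c : ℝ} (hc : 0 < c)
    (hLfin : ∀ t ∈ Set.Icc (0 : ℝ) c, Integrable (fun ω => Real.exp (t * (ε 1 ω) ^ 2)) μ)
    (L : ℝ → ℝ) (hLdef : ∀ t, L t = Real.log (∫ ω, Real.exp (t * (ε 1 ω) ^ 2) ∂μ))
    -- `I` is the Fenchel–Legendre transform of `L` on `[0, c]`
    (I : ℝ → ℝ) (hIdef : ∀ z, I z = sSup ((fun t => z * t - L t) '' Set.Icc (0 : ℝ) c))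
    -- `H` is the cumulant generating function of `φ₀²`
    (H : ℝ → ℝ) (hHdef : ∀ t, H t = Real.log (∫ ω, Real.exp (t * (φ 0 ω) ^ 2) ∂μ))
    (n : ℕ) (hn : 1 ≤ n) {x y p : ℝ} (hx : 0 < x) (hy : 0 < y) (hp : 1 < p) :
    μ {ω | x ≤ |(∑ k ∈ Finset.Icc 1 n, φ (k - 1) ω * X k ω) /
          (∑ k ∈ Finset.Icc 1 n, (φ (k - 1) ω) ^ 2) - θ|}
      ≤ ENNReal.ofReal
          (2 * Real.exp ((n / p) * H (-(p - 1) * x ^ 2 / (2 * σ2 * (1 + y))))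
            + Real.exp (-(n : ℝ) * I (σ2 * y / n))) := by
  classical
  have hp0 : (0:ℝ) < p := lt_trans one_pos hp
  have hn0 : (0:ℝ) < (n:ℝ) := by exact_mod_cast hn
  set t0 : ℝ := -(p - 1) * x ^ 2 / (2 * σ2 * (1 + y)) with ht0
  have ht0neg : t0 < 0 := by
    rw [ht0]
    apply div_neg_of_neg_of_pos
    · nlinarith [mul_pos (sub_pos.2 hp) (pow_pos hx 2)]
    · nlinarith
  set s : ℝ := t0 / p with hs
  have hsneg : s < 0 := div_neg_of_neg_of_pos ht0neg hp0
  set a : ℝ := σ2 * y / x ^ 2 with ha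
  have ha0 : 0 < a := by rw [ha]; positivity
  set z : ℝ := σ2 * y / (n:ℝ) with hz
  -- the two auxiliary events
  set A : Set Ω := {ω | (∑ i ∈ Finset.range n, fun ω' => φ i ω' ^ 2) ω ≤ a} with hA
  set B : Set Ω := {ω | σ2 * y ≤ ∑ k ∈ Finset.range n, ε (k + 1) ω ^ 2} with hB
  -- rewriting of the sums
  have hsum2 : ∀ ω, (∑ k ∈ Finset.Icc 1 n, (φ (k - 1) ω) ^ 2)
      = ∑ k ∈ Finset.range n, φ k ω ^ 2 := by
    intro ω
    rw [← Finset.Ico_add_one_right_eq_Icc, Finset.sum_Ico_eq_sum_range]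
    simp only [Nat.add_sub_cancel, Nat.add_sub_cancel_left, Nat.succ_sub_one]
  have hsum1 : ∀ ω, (∑ k ∈ Finset.Icc 1 n, φ (k - 1) ω * X k ω)
      = θ * (∑ k ∈ Finset.range n, φ k ω ^ 2)
        + ∑ k ∈ Finset.range n, φ k ω * ε (k + 1) ω := by
    intro ω
    rw [← Finset.Ico_add_one_right_eq_Icc, Finset.sum_Ico_eq_sum_range]
    simp only [Nat.add_sub_cancel, Nat.add_sub_cancel_left, Nat.succ_sub_one]
    rw [Finset.mul_sum, ← Finset.sum_add_distrib]
    refine Finset.sum_congr rfl fun i _ => ?_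
    rw [Nat.add_comm 1 i, hX i ω]
    ring
  -- inclusion of the event in A ∪ B
  have hsub : {ω | x ≤ |(∑ k ∈ Finset.Icc 1 n, φ (k - 1) ω * X k ω) /
          (∑ k ∈ Finset.Icc 1 n, (φ (k - 1) ω) ^ 2) - θ|} ⊆ A ∪ B := by
    intro ω hω
    simp only [Set.mem_setOf_eq] at hω
    rw [hsum1 ω, hsum2 ω] at hω
    have hAmem : (∑ i ∈ Finset.range n, φ i ω ^ 2 ≤ a) → ω ∈ A ∪ B := fun h => by
      left
      show (∑ i ∈ Finset.range n, fun ω' => φ i ω' ^ 2) ω ≤ a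
      simpa [Finset.sum_apply] using h
    set Qω : ℝ := ∑ k ∈ Finset.range n, φ k ω ^ 2 with hQω
    have hQnonneg : 0 ≤ Qω := Finset.sum_nonneg fun _ _ => sq_nonneg _
    rcases eq_or_lt_of_le hQnonneg with hQ0 | hQ0
    · exact hAmem (by rw [← hQ0]; exact ha0.le)
    by_cases hBω : σ2 * y ≤ ∑ k ∈ Finset.range n, ε (k + 1) ω ^ 2
    · right; exact hBω
    push_neg at hBω
    refine hAmem ?_
    set Mω : ℝ := ∑ k ∈ Finset.range n, φ k ω * ε (k + 1) ω with hMω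
    have hnum : (θ * Qω + Mω) / Qω - θ = Mω / Qω := by
      field_simp
      ring
    rw [hnum, abs_div, abs_of_pos hQ0, le_div_iff₀ hQ0] at hω
    have hCS : Mω ^ 2 ≤ Qω * (∑ k ∈ Finset.range n, ε (k + 1) ω ^ 2) :=
      Finset.sum_mul_sq_le_sq_mul_sq _ _ _
    have h1 : (x * Qω) ^ 2 ≤ Mω ^ 2 := by
      rw [← sq_abs Mω]
      exact pow_le_pow_left₀ (by positivity) hω 2
    have h3 : Qω * (∑ k ∈ Finset.range n, ε (k + 1) ω ^ 2) ≤ Qω * (σ2 * y) :=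
      mul_le_mul_of_nonneg_left hBω.le hQnonneg
    show Qω ≤ a
    rw [ha, le_div_iff₀ (by positivity : (0:ℝ) < x ^ 2)]
    nlinarith
  -- Chernoff bound for A
  have hψmeas : ∀ i : ℕ, Measurable fun ω => φ i ω ^ 2 := fun i => (hφmeas i).pow_const 2
  have hψindep : iIndepFun
      (fun i => fun ω => φ i ω ^ 2) μ :=
    hφindep.comp (fun _ => fun u : ℝ => u ^ 2) fun _ => measurable_id.pow_const 2
  have hsumQ_meas : Measurable fun ω => (∑ i ∈ Finset.range n, fun ω' => φ i ω' ^ 2) ω := by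
    simp only [Finset.sum_apply]
    exact Finset.measurable_sum _ fun i _ => hψmeas i
  have hsumQ_nonneg : ∀ ω, 0 ≤ (∑ i ∈ Finset.range n, fun ω' => φ i ω' ^ 2) ω := by
    intro ω; simp only [Finset.sum_apply]; exact Finset.sum_nonneg fun _ _ => sq_nonneg _
  have hIntQ : Integrable
      (fun ω => Real.exp (s * (∑ i ∈ Finset.range n, fun ω' => φ i ω' ^ 2) ω)) μ :=
    integrable_exp_nonpos_mul hsumQ_meas hsumQ_nonneg hsneg.le
  have hchernA := measure_le_le_exp_mul_mgf (μ := μ)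
      (X := ∑ i ∈ Finset.range n, fun ω' => φ i ω' ^ 2) a hsneg.le hIntQ
  -- mgf of the sum
  have hmgfA : mgf (∑ i ∈ Finset.range n, fun ω' => φ i ω' ^ 2) μ s = Real.exp (H s) ^ n := by
    rw [hψindep.mgf_sum hψmeas]
    have hIint : ∀ i : ℕ, Integrable (fun ω => Real.exp (s * φ i ω ^ 2)) μ := fun i =>
      integrable_exp_nonpos_mul (hψmeas i) (fun ω => sq_nonneg _) hsneg.le
    have h0 : mgf (fun ω => φ 0 ω ^ 2) μ s = Real.exp (H s) := by
      have hrfl : mgf (fun ω => φ 0 ω ^ 2) μ s = ∫ ω, Real.exp (s * φ 0 ω ^ 2) ∂μ := rfl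
      rw [hHdef s, ← hrfl, Real.exp_log (mgf_pos (hIint 0))]
    have hmgfeq : ∀ i : ℕ, mgf (fun ω => φ i ω ^ 2) μ s = Real.exp (H s) := by
      intro i
      rw [← h0]
      exact ((hφident i).comp (show Measurable fun u : ℝ => Real.exp (s * u ^ 2) from
        ((measurable_id.pow_const 2).const_mul s).exp)).integral_eq
    calc ∏ i ∈ Finset.range n, mgf (fun ω' => φ i ω' ^ 2) μ s
        = ∏ i ∈ Finset.range n, Real.exp (H s) := Finset.prod_congr rfl fun i _ => hmgfeq i
      _ = Real.exp (H s) ^ n := by rw [Finset.prod_const, Finset.card_range]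
  -- relate H s to H t0 via Hoelder
  have hHolder : H s ≤ H t0 / p := by
    have hkey := exp_holder (μ := μ) ((hφmeas 0).pow_const 2) (fun ω => sq_nonneg _) ht0neg.le hp
    have hposS : 0 < ∫ ω, Real.exp (t0 / p * φ 0 ω ^ 2) ∂μ :=
      mgf_pos (X := fun ω => φ 0 ω ^ 2) (t := t0 / p)
        (integrable_exp_nonpos_mul ((hφmeas 0).pow_const 2) (fun ω => sq_nonneg _)
          (by rw [← hs]; exact hsneg.le))
    have hposT : 0 < ∫ ω, Real.exp (t0 * φ 0 ω ^ 2) ∂μ :=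
      mgf_pos (X := fun ω => φ 0 ω ^ 2) (t := t0)
        (integrable_exp_nonpos_mul ((hφmeas 0).pow_const 2) (fun ω => sq_nonneg _) ht0neg.le)
    rw [hHdef, hHdef]
    calc Real.log (∫ ω, Real.exp (s * φ 0 ω ^ 2) ∂μ)
        ≤ Real.log ((∫ ω, Real.exp (t0 * φ 0 ω ^ 2) ∂μ) ^ (1 / p)) := by
          apply Real.log_le_log
          · rw [hs]; exact hposS
          · rw [hs]; exact hkey
      _ = (1 / p) * Real.log (∫ ω, Real.exp (t0 * φ 0 ω ^ 2) ∂μ) := Real.log_rpow hposT _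
      _ = Real.log (∫ ω, Real.exp (t0 * φ 0 ω ^ 2) ∂μ) / p := by ring
  -- numeric bound on -s * a
  have hsa : -s * a ≤ 1 / 2 := by
    have hval : -s * a = (p - 1) * y / (2 * p * (1 + y)) := by
      rw [hs, ht0, ha]
      field_simp
    rw [hval, div_le_iff₀ (by positivity)]
    nlinarith
  have hexp2 : Real.exp (1 / 2 : ℝ) ≤ 2 := by
    have h : (1:ℝ)/2 ≤ Real.log 2 := by linarith [Real.log_two_gt_d9]
    calc Real.exp (1/2 : ℝ) ≤ Real.exp (Real.log 2) := Real.exp_le_exp.2 h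
      _ = 2 := Real.exp_log two_pos
  have hAbound : (μ A).toReal ≤ 2 * Real.exp ((n / p) * H t0) := by
    have h1 : (μ A).toReal ≤ Real.exp (-s * a) * Real.exp (H s) ^ n := by
      rw [← hmgfA]; exact hchernA
    have h2 : Real.exp (-s * a) * Real.exp (H s) ^ n
        ≤ Real.exp (1/2) * Real.exp ((n / p) * H t0) := by
      apply mul_le_mul (Real.exp_le_exp.2 hsa) ?_ (by positivity) (Real.exp_pos _).le
      rw [← Real.exp_nat_mul]
      apply Real.exp_le_exp.2
      calc (n:ℝ) * H s ≤ (n:ℝ) * (H t0 / p) :=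
            mul_le_mul_of_nonneg_left hHolder hn0.le
        _ = (n / p) * H t0 := by ring
    calc (μ A).toReal ≤ Real.exp (-s * a) * Real.exp (H s) ^ n := h1
      _ ≤ Real.exp (1/2) * Real.exp ((n / p) * H t0) := h2
      _ ≤ 2 * Real.exp ((n / p) * H t0) := mul_le_mul_of_nonneg_right hexp2 (Real.exp_pos _).le
  -- measurability helper
  have hmexp : ∀ t : ℝ, Measurable fun u : ℝ => Real.exp (t * u ^ 2) := fun t =>
    ((measurable_id.pow_const 2).const_mul t).exp
  -- product formula for the ε's
  have epskey : ∀ t : ℝ, Integrable (fun ω => Real.exp (t * ε 1 ω ^ 2)) μ →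
      ∀ m : ℕ, Integrable (fun ω => Real.exp (t * ∑ k ∈ Finset.range m, ε (k + 1) ω ^ 2)) μ ∧
        ∫ ω, Real.exp (t * ∑ k ∈ Finset.range m, ε (k + 1) ω ^ 2) ∂μ
          = (∫ ω, Real.exp (t * ε 1 ω ^ 2) ∂μ) ^ m := by
    intro t hint m
    induction m with
    | zero => simp
    | succ m ih =>
      have hgid : IdentDistrib (fun ω => Real.exp (t * ε (m + 1) ω ^ 2))
          (fun ω => Real.exp (t * ε 1 ω ^ 2)) μ μ :=
        (hεident (m + 1) (Nat.le_add_left 1 m)).comp (hmexp t)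
      have hgint : Integrable (fun ω => Real.exp (t * ε (m + 1) ω ^ 2)) μ :=
        hgid.integrable_iff.2 hint
      have hε' : Measurable[MeasurableSpace.comap (ε (m + 1)) inferInstance] (ε (m + 1)) :=
        Measurable.of_comap_le le_rfl
      have hgm : Measurable[MeasurableSpace.comap (ε (m + 1)) inferInstance]
          fun ω => Real.exp (t * ε (m + 1) ω ^ 2) := ((hε'.pow_const 2).const_mul t).exp
      have hsumGm : Measurable[⨆ k ∈ Finset.range m, (MeasurableSpace.comap (φ k) inferInstance ⊔
          MeasurableSpace.comap (ε (k + 1)) inferInstance)]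
          fun ω => Real.exp (t * ∑ k ∈ Finset.range m, ε (k + 1) ω ^ 2) := by
        refine Measurable.exp (Measurable.const_mul ?_ t)
        refine Finset.measurable_sum _ fun k hk => ?_
        have hle : MeasurableSpace.comap (ε (k + 1)) inferInstance ≤
            ⨆ k ∈ Finset.range m, (MeasurableSpace.comap (φ k) inferInstance ⊔
              MeasurableSpace.comap (ε (k + 1)) inferInstance) :=
          le_trans le_sup_right (le_biSup
            (f := fun k => MeasurableSpace.comap (φ k) inferInstance ⊔
              MeasurableSpace.comap (ε (k + 1)) inferInstance) hk)
        exact (Measurable.of_comap_le hle).pow_const 2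
      have hIF : IndepFun (fun ω => Real.exp (t * ε (m + 1) ω ^ 2))
          (fun ω => Real.exp (t * ∑ k ∈ Finset.range m, ε (k + 1) ω ^ 2)) μ :=
        indepFun_of_indep (hindep m) hgm hsumGm
      have hfeq : (fun ω => Real.exp (t * ∑ k ∈ Finset.range (m + 1), ε (k + 1) ω ^ 2))
          = fun ω => Real.exp (t * ∑ k ∈ Finset.range m, ε (k + 1) ω ^ 2)
            * Real.exp (t * ε (m + 1) ω ^ 2) := by
        funext ω
        rw [Finset.sum_range_succ, mul_add, Real.exp_add]
      constructor
      · rw [hfeq]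
        exact hIF.symm.integrable_mul ih.1 hgint
      · rw [hfeq]
        have hmul := hIF.symm.integral_fun_mul_eq_mul_integral ih.1.aestronglyMeasurable
          hgint.aestronglyMeasurable
        rw [hmul, ih.2, hgid.integral_eq, pow_succ]
  -- Chernoff bound for B
  have hBbound : (μ B).toReal ≤ Real.exp (-(n:ℝ) * I z) := by
    have hB' : ∀ t ∈ Set.Icc (0:ℝ) c, (μ B).toReal ≤ Real.exp (-(n:ℝ) * (z * t - L t)) := by
      intro t htc
      obtain ⟨hint_n, heq_n⟩ := epskey t (hLfin t htc) n
      have hchern := measure_ge_le_exp_mul_mgf (μ := μ)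
        (X := fun ω => ∑ k ∈ Finset.range n, ε (k + 1) ω ^ 2) (σ2 * y) htc.1 hint_n
      have hposL : 0 < ∫ ω, Real.exp (t * ε 1 ω ^ 2) ∂μ :=
        mgf_pos (X := fun ω => ε 1 ω ^ 2) (hLfin t htc)
      have hmgfB : mgf (fun ω => ∑ k ∈ Finset.range n, ε (k + 1) ω ^ 2) μ t
          = Real.exp (L t) ^ n := by
        have hrfl : mgf (fun ω => ∑ k ∈ Finset.range n, ε (k + 1) ω ^ 2) μ t
            = ∫ ω, Real.exp (t * ∑ k ∈ Finset.range n, ε (k + 1) ω ^ 2) ∂μ := rfl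
        rw [hrfl, heq_n, hLdef t, Real.exp_log hposL]
      rw [hmgfB] at hchern
      calc (μ B).toReal ≤ Real.exp (-t * (σ2 * y)) * Real.exp (L t) ^ n := hchern
        _ = Real.exp (-(n:ℝ) * (z * t - L t)) := by
            rw [← Real.exp_nat_mul, ← Real.exp_add]
            congr 1
            have hnne : (n:ℝ) ≠ 0 := hn0.ne'
            rw [hz]
            field_simp
            ring
    rw [hIdef z]
    by_cases hβ0 : (μ B).toReal = 0
    · rw [hβ0]; positivity
    · have hβpos : 0 < (μ B).toReal := lt_of_le_of_ne ENNReal.toReal_nonneg (Ne.symm hβ0)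
      have hub : ∀ w ∈ (fun t => z * t - L t) '' Set.Icc (0:ℝ) c,
          w ≤ -Real.log ((μ B).toReal) / n := by
        rintro w ⟨t, htc, rfl⟩
        show z * t - L t ≤ -Real.log ((μ B).toReal) / n
        have h2 : Real.log ((μ B).toReal) ≤ -(n:ℝ) * (z * t - L t) := by
          calc Real.log ((μ B).toReal)
              ≤ Real.log (Real.exp (-(n:ℝ) * (z * t - L t))) :=
                Real.log_le_log hβpos (hB' t htc)
            _ = -(n:ℝ) * (z * t - L t) := Real.log_exp _
        rw [le_div_iff₀ hn0]
        nlinarith [h2, mul_comm ((n:ℝ)) (z * t - L t)]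
      have hne : ((fun t => z * t - L t) '' Set.Icc (0:ℝ) c).Nonempty :=
        ⟨z * 0 - L 0, ⟨0, Set.mem_Icc.2 ⟨le_refl 0, hc.le⟩, rfl⟩⟩
      calc (μ B).toReal = Real.exp (Real.log ((μ B).toReal)) := (Real.exp_log hβpos).symm
        _ ≤ Real.exp (-(n:ℝ) * sSup ((fun t => z * t - L t) '' Set.Icc (0:ℝ) c)) := by
            apply Real.exp_le_exp.2
            have hsup := csSup_le hne hub
            rw [le_div_iff₀ hn0] at hsup
            rw [neg_mul, mul_comm]
            exact le_neg.2 hsup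
  -- assembling
  refine le_trans (measure_mono hsub) (le_trans (measure_union_le A B) ?_)
  have hA' : μ A ≤ ENNReal.ofReal (2 * Real.exp ((n / p) * H t0)) := by
    rw [← ENNReal.ofReal_toReal (measure_ne_top μ A)]
    exact ENNReal.ofReal_le_ofReal hAbound
  have hB'' : μ B ≤ ENNReal.ofReal (Real.exp (-(n:ℝ) * I z)) := by
    rw [← ENNReal.ofReal_toReal (measure_ne_top μ B)]
    exact ENNReal.ofReal_le_ofReal hBbound
  calc μ A + μ B ≤ ENNReal.ofReal (2 * Real.exp ((n / p) * H t0))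
        + ENNReal.ofReal (Real.exp (-(n:ℝ) * I z)) := add_le_add hA' hB''
    _ = ENNReal.ofReal (2 * Real.exp ((n / p) * H t0) + Real.exp (-(n:ℝ) * I z)) :=
        (ENNReal.ofReal_add (by positivity) (by positivity)).symm
end

section
/- Consider the Gaussian autoregressive process X_{k+1} = θX_k + ε_{k+1}, where (ε_n) are i.i.d. N(0, σ²) with σ² > 0 and X_0 is independent of (ε_n) with N(0, τ²) distribution, τ² ≥ σ². Let θ̃_n = (Σ_{k=1}^n X_{k−1}X_k)/(Σ_{k=0}^n X_k²) be the Yule–Walker estimator, let h(y) = (1+y)log(1+y) − y, and for x > 0 let y_x be the unique positive solution of h(y_x) = x². Then for all n ≥ 1 and x > 0, P(|θ̃_n − θ| ≥ x + |θ|) ≤ 2 exp( −n x² / (2(1 + y_x)) ). -/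
open MeasureTheory ProbabilityTheory Real Finset

lemma gauss_lint (v : NNReal) (hv : v ≠ 0) (a b : ℝ) (hb : 0 ≤ b) :
    ∫⁻ z, ENNReal.ofReal (rexp (a * z - b * z ^ 2)) ∂(gaussianReal 0 v)
      = ENNReal.ofReal ((Real.sqrt (1 + 2 * b * v))⁻¹ *
          rexp (a ^ 2 * v / (2 * (1 + 2 * b * v)))) := by
  have hv' : (0:ℝ) < v := by positivity
  set A : ℝ := b + 1 / (2 * v) with hA_def
  have hA : 0 < A := by positivity
  have h1 : (0:ℝ) < 1 + 2 * b * v := by positivity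
  set c : ℝ := a / (2 * A) with hc_def
  set D : ℝ := a ^ 2 / (4 * A) with hD_def
  have hpt : ∀ z : ℝ, gaussianPDFReal 0 v z * rexp (a * z - b * z ^ 2)
      = (Real.sqrt (2 * π * v))⁻¹ * rexp D * rexp (-A * (z - c) ^ 2) := by
    intro z
    have hAne : A ≠ 0 := ne_of_gt hA
    have hvne : (v:ℝ) ≠ 0 := ne_of_gt hv'
    have hexp : rexp (-(z - 0) ^ 2 / (2 * (v:ℝ))) * rexp (a * z - b * z ^ 2)
        = rexp D * rexp (-A * (z - c) ^ 2) := by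
      rw [← Real.exp_add, ← Real.exp_add]
      congr 1
      have hb' : b = A - 1 / (2 * (v:ℝ)) := by rw [hA_def]; ring
      rw [hb', hc_def, hD_def]
      field_simp
      ring
    calc gaussianPDFReal 0 v z * rexp (a * z - b * z ^ 2)
        = (Real.sqrt (2 * π * v))⁻¹ * (rexp (-(z - 0) ^ 2 / (2 * (v:ℝ))) * rexp (a * z - b * z ^ 2)) := by
          rw [gaussianPDFReal]; ring
      _ = _ := by rw [hexp]; ring
  rw [gaussianReal_of_var_ne_zero _ hv,
    lintegral_withDensity_eq_lintegral_mul _ (measurable_gaussianPDF _ _)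
      ((by fun_prop : Measurable fun z : ℝ => ENNReal.ofReal (rexp (a * z - b * z ^ 2))))]
  have : ∀ z : ℝ, (gaussianPDF 0 v * fun z => ENNReal.ofReal (rexp (a * z - b * z ^ 2))) z
      = ENNReal.ofReal ((Real.sqrt (2 * π * v))⁻¹ * rexp D) *
        ENNReal.ofReal (rexp (-A * (z - c) ^ 2)) := by
    intro z
    simp only [Pi.mul_apply, gaussianPDF, ← ENNReal.ofReal_mul (gaussianPDFReal_nonneg _ _ _)]
    rw [hpt z, ENNReal.ofReal_mul (by positivity)]
  simp_rw [this]
  rw [lintegral_const_mul' _ _ ENNReal.ofReal_ne_top]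
  have hInt : Integrable (fun z : ℝ => rexp (-A * (z - c) ^ 2)) := by
    exact (integrable_exp_neg_mul_sq hA).comp_sub_right c
  rw [← ofReal_integral_eq_lintegral_ofReal hInt (ae_of_all _ fun z => (exp_pos _).le)]
  rw [integral_sub_right_eq_self (fun z : ℝ => rexp (-A * z ^ 2)) c, integral_gaussian]
  rw [← ENNReal.ofReal_mul (by positivity)]
  congr 1
  have hD : D = a ^ 2 * v / (2 * (1 + 2 * b * v)) := by
    rw [hD_def, hA_def]
    field_simp
    ring
  have hs : (Real.sqrt (2 * π * v))⁻¹ * Real.sqrt (π / A) = (Real.sqrt (1 + 2 * b * v))⁻¹ := by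
    have hA2 : Real.sqrt (π / A) = Real.sqrt (2 * π * (v:ℝ)) * (Real.sqrt (1 + 2 * b * (v:ℝ)))⁻¹ := by
      rw [← Real.sqrt_inv, ← Real.sqrt_mul (by positivity : (0:ℝ) ≤ 2 * π * (v:ℝ))]
      congr 1
      rw [hA_def]
      field_simp
      ring
    rw [hA2, ← mul_assoc, inv_mul_cancel₀ (by positivity), one_mul]
  rw [hD, ← hs]
  ring

lemma gauss_mgf (v : NNReal) (hv : v ≠ 0) (a : ℝ) :
    ∫⁻ z, ENNReal.ofReal (rexp (a * z)) ∂(gaussianReal 0 v)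
      = ENNReal.ofReal (rexp (a ^ 2 * v / 2)) := by
  have h := gauss_lint v hv a 0 le_rfl
  simpa using h

lemma gauss_sq (v : NNReal) (hv : v ≠ 0) (b m : ℝ) (hb : 0 ≤ b) :
    ∫⁻ z, ENNReal.ofReal (rexp (-(b * (m + z) ^ 2))) ∂(gaussianReal 0 v)
      ≤ ENNReal.ofReal ((Real.sqrt (1 + 2 * b * v))⁻¹) := by
  have hv' : (0:ℝ) < v := by positivity
  have h1 : (0:ℝ) < 1 + 2 * b * v := by positivity
  have hpt : ∀ z : ℝ, rexp (-(b * (m + z) ^ 2))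
      = rexp (-(b * m ^ 2)) * rexp ((-(2 * b * m)) * z - b * z ^ 2) := by
    intro z; rw [← Real.exp_add]; congr 1; ring
  simp_rw [hpt, ENNReal.ofReal_mul (Real.exp_pos _).le]
  rw [lintegral_const_mul' _ _ ENNReal.ofReal_ne_top,
    gauss_lint v hv _ b hb, ← ENNReal.ofReal_mul (Real.exp_pos _).le]
  apply ENNReal.ofReal_le_ofReal
  have hD : (-(2 * b * m)) ^ 2 * v / (2 * (1 + 2 * b * v)) ≤ b * m ^ 2 := by
    rw [div_le_iff₀ (by positivity)]
    nlinarith [mul_nonneg hb (sq_nonneg m), sq_nonneg (b * m), NNReal.coe_nonneg v]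
  calc rexp (-(b * m ^ 2)) * ((Real.sqrt (1 + 2 * b * v))⁻¹ *
        rexp ((-(2 * b * m)) ^ 2 * v / (2 * (1 + 2 * b * v))))
      = (Real.sqrt (1 + 2 * b * v))⁻¹ *
        (rexp (-(b * m ^ 2)) * rexp ((-(2 * b * m)) ^ 2 * v / (2 * (1 + 2 * b * v)))) := by ring
    _ ≤ (Real.sqrt (1 + 2 * b * v))⁻¹ * 1 := by
        apply mul_le_mul_of_nonneg_left _ (by positivity)
        rw [← Real.exp_add, Real.exp_le_one_iff]
        linarith
    _ = (Real.sqrt (1 + 2 * b * v))⁻¹ := mul_one _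

lemma key_indep {Ω : Type*} {m0 : MeasurableSpace Ω} (μ : Measure Ω) [IsProbabilityMeasure μ]
    (Y : ℕ → Ω → ℝ) (hY : ∀ k, Measurable (Y k))
    (hind : iIndepFun Y μ) (m : ℕ)
    (ψ : (ℕ → ℝ) → ℝ → ℝ) (hψ : Measurable (Function.uncurry ψ)) :
    ∫⁻ ω, ENNReal.ofReal (ψ (fun j => if j < m then Y j ω else 0) (Y m ω)) ∂μ
      = ∫⁻ ω, ∫⁻ z, ENNReal.ofReal (ψ (fun j => if j < m then Y j ω else 0) z)
          ∂(μ.map (Y m)) ∂μ := by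
  set W : Ω → (ℕ → ℝ) := fun ω j => if j < m then Y j ω else 0 with hW_def
  have hWmeas : Measurable W := by
    apply measurable_pi_lambda
    intro j
    by_cases h : j < m
    · simpa [hW_def, h] using hY j
    · simpa [hW_def, h] using measurable_const
  have hindWY : IndepFun W (Y m) μ := by
    have h := hind.indepFun_finset (Finset.range m) {m}
      (by simp [Finset.disjoint_left]; omega) hY
    have hg : Measurable (fun v : ((i : (Finset.range m : Finset ℕ)) → ℝ) =>
        (fun j => if h : j < m then v ⟨j, Finset.mem_range.mpr h⟩ else 0 : ℕ → ℝ)) := by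
      apply measurable_pi_lambda
      intro j
      by_cases h : j < m
      · simpa [h] using measurable_pi_apply _
      · simpa [h] using measurable_const
    have hh : Measurable (fun u : ((i : ({m} : Finset ℕ)) → ℝ) =>
        u ⟨m, Finset.mem_singleton_self m⟩) := measurable_pi_apply _
    have h2 := h.comp hg hh
    convert h2 using 1
    all_goals rfl

  haveI : IsProbabilityMeasure (μ.map (Y m)) := Measure.isProbabilityMeasure_map (hY m).aemeasurable
  haveI : IsProbabilityMeasure (μ.map W) := Measure.isProbabilityMeasure_map hWmeas.aemeasurable
  have hmap : μ.map (fun ω => (W ω, Y m ω)) = (μ.map W).prod (μ.map (Y m)) :=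
    (indepFun_iff_map_prod_eq_prod_map_map hWmeas.aemeasurable (hY m).aemeasurable).mp hindWY
  have hF : Measurable (fun p : (ℕ → ℝ) × ℝ => ENNReal.ofReal (ψ p.1 p.2)) := by
    exact hψ.ennreal_ofReal
  calc ∫⁻ ω, ENNReal.ofReal (ψ (W ω) (Y m ω)) ∂μ
      = ∫⁻ p, ENNReal.ofReal (ψ p.1 p.2) ∂(μ.map (fun ω => (W ω, Y m ω))) :=
        (lintegral_map hF (hWmeas.prodMk (hY m))).symm
    _ = ∫⁻ p, ENNReal.ofReal (ψ p.1 p.2) ∂((μ.map W).prod (μ.map (Y m))) := by rw [hmap]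
    _ = ∫⁻ w, ∫⁻ z, ENNReal.ofReal (ψ w z) ∂(μ.map (Y m)) ∂(μ.map W) :=
        lintegral_prod _ hF.aemeasurable
    _ = ∫⁻ ω, ∫⁻ z, ENNReal.ofReal (ψ (W ω) z) ∂(μ.map (Y m)) ∂μ := by
        apply lintegral_map _ hWmeas
        exact Measurable.lintegral_prod_right hF

noncomputable def arSol (θ : ℝ) : ℕ → (ℕ → ℝ) → ℝ
  | 0 => fun w => w 0
  | (k+1) => fun w => θ * arSol θ k w + w (k+1)

lemma arSol_measurable (θ : ℝ) (k : ℕ) : Measurable (arSol θ k) := by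
  induction k with
  | zero => exact measurable_pi_apply 0
  | succ k ih => exact (measurable_const.mul ih).add (measurable_pi_apply _)

lemma arSol_congr (θ : ℝ) (k : ℕ) {w w' : ℕ → ℝ} (h : ∀ j, j ≤ k → w j = w' j) :
    arSol θ k w = arSol θ k w' := by
  induction k with
  | zero => exact h 0 le_rfl
  | succ k ih =>
      show θ * arSol θ k w + w (k+1) = θ * arSol θ k w' + w' (k+1)
      rw [ih (fun j hj => h j (hj.trans (Nat.le_succ k))), h (k+1) le_rfl]

lemma sum_Icc_one_eq_sum_range (f : ℕ → ℝ) (n : ℕ) :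
    ∑ k ∈ Finset.Icc 1 n, f k = ∑ k ∈ Finset.range n, f (k + 1) := by
  induction n with
  | zero => simp
  | succ n ih =>
      rw [Finset.sum_Icc_succ_top (Nat.succ_le_succ (Nat.zero_le n)), ih,
        Finset.sum_range_succ]

lemma X_eq_arSol {Ω : Type*} (θ : ℝ) (X ε : ℕ → Ω → ℝ)
    (hrec : ∀ k : ℕ, ∀ ω, X (k + 1) ω = θ * X k ω + ε (k + 1) ω) (k : ℕ) (ω : Ω) :
    X k ω = arSol θ k (fun j => if j = 0 then X 0 ω else ε j ω) := by
  induction k with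
  | zero => simp [arSol]
  | succ k ih =>
      show X (k+1) ω = θ * arSol θ k _ + _
      rw [← ih, hrec k ω]
      simp

lemma X_eq_arSol_trunc {Ω : Type*} (θ : ℝ) (X ε : ℕ → Ω → ℝ)
    (hrec : ∀ k : ℕ, ∀ ω, X (k + 1) ω = θ * X k ω + ε (k + 1) ω) {k m : ℕ} (hk : k < m) (ω : Ω) :
    X k ω = arSol θ k
      (fun j => if j < m then (if j = 0 then X 0 ω else ε j ω) else 0) := by
  rw [X_eq_arSol θ X ε hrec k ω]
  apply arSol_congr
  intro j hj
  rw [if_pos (lt_of_le_of_lt hj hk)]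

lemma lint_exp_linear (σ2 : NNReal) (hσ2 : σ2 ≠ 0) (B a e : ℝ) :
    ∫⁻ z, ENNReal.ofReal (rexp (B + (a * z - e))) ∂(gaussianReal 0 σ2)
      = ENNReal.ofReal (rexp (B - e + a^2*(σ2:ℝ)/2)) := by
  have hpt : ∀ z : ℝ, rexp (B + (a * z - e)) = rexp (B - e) * rexp (a * z) := by
    intro z; rw [← Real.exp_add]; congr 1; ring
  simp_rw [hpt, ENNReal.ofReal_mul (Real.exp_pos _).le]
  rw [lintegral_const_mul' _ _ ENNReal.ofReal_ne_top, gauss_mgf σ2 hσ2,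
    ← ENNReal.ofReal_mul (Real.exp_pos _).le, ← Real.exp_add]

set_option maxHeartbeats 1000000 in
lemma lemA {Ω : Type*} {m0 : MeasurableSpace Ω} {μ : Measure Ω} [IsProbabilityMeasure μ]
    (θ : ℝ) (X ε : ℕ → Ω → ℝ)
    (hXmeas : ∀ k, Measurable (X k)) (hεmeas : ∀ k, Measurable (ε k))
    {σ2 : NNReal} (hσ2 : σ2 ≠ 0)
    (hεgauss : ∀ k, 1 ≤ k → μ.map (ε k) = gaussianReal 0 σ2)
    (hindep : iIndepFun
      (fun k : ℕ => if k = 0 then X 0 else ε k) μ)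
    (hrec : ∀ k : ℕ, ∀ ω, X (k + 1) ω = θ * X k ω + ε (k + 1) ω)
    (c : ℝ) (N : ℕ) :
    ∫⁻ ω, ENNReal.ofReal (rexp ((∑ k ∈ Finset.Icc 1 N, c * X (k-1) ω * ε k ω)
      - c^2*(σ2:ℝ)/2 * ∑ k ∈ Finset.range N, (X k ω)^2)) ∂μ ≤ 1 := by
  set v : ℝ := (σ2 : ℝ) with hv_def
  set Y : ℕ → Ω → ℝ := fun k => if k = 0 then X 0 else ε k with hY
  have hYmeas : ∀ k, Measurable (Y k) := by
    intro k
    by_cases h : k = 0 <;> simp only [hY, h, if_true, if_false] <;>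
      [exact hXmeas 0; exact hεmeas k]
  induction N with
  | zero => simp
  | succ N ih =>
    set ψ : (ℕ → ℝ) → ℝ → ℝ := fun w z =>
      rexp ((∑ k ∈ Finset.Icc 1 N, c * arSol θ (k-1) w * w k)
        - c^2*v/2 * (∑ k ∈ Finset.range N, (arSol θ k w)^2)
        + (c * arSol θ N w * z - c^2*v/2 * (arSol θ N w)^2)) with hψdef
    have h1m : Measurable fun w : ℕ → ℝ => ∑ k ∈ Finset.Icc 1 N, c * arSol θ (k-1) w * w k :=
      Finset.measurable_sum _ (fun k _ =>
        (measurable_const.mul (arSol_measurable θ (k-1))).mul (measurable_pi_apply k))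
    have h2m : Measurable fun w : ℕ → ℝ => ∑ k ∈ Finset.range N, (arSol θ k w)^2 :=
      Finset.measurable_sum _ (fun k _ => (arSol_measurable θ k).pow_const 2)
    have hψmeas : Measurable (Function.uncurry ψ) := by
      apply Real.measurable_exp.comp
      exact ((h1m.comp measurable_fst).sub
          (measurable_const.mul (h2m.comp measurable_fst))).add
        ((((measurable_const.mul ((arSol_measurable θ N).comp measurable_fst)).mul
          measurable_snd)).sub
          (measurable_const.mul (((arSol_measurable θ N).comp measurable_fst).pow_const 2)))
    have hint : ∀ ω, ENNReal.ofReal (rexp ((∑ k ∈ Finset.Icc 1 (N+1), c * X (k-1) ω * ε k ω)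
        - c^2*v/2 * ∑ k ∈ Finset.range (N+1), (X k ω)^2))
        = ENNReal.ofReal (ψ (fun j => if j < N+1 then Y j ω else 0) (Y (N+1) ω)) := by
      intro ω
      congr 1
      set W : ℕ → ℝ := fun j => if j < N+1 then Y j ω else 0 with hW
      have hXk : ∀ k, k < N+1 → X k ω = arSol θ k W := by
        intro k hk
        simp only [hW, hY, apply_ite (fun f : Ω → ℝ => f ω)]
        exact X_eq_arSol_trunc θ X ε hrec hk ω
      have hwk : ∀ k, 1 ≤ k → k < N+1 → W k = ε k ω := by
        intro k hk1 hk2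
        simp only [hW, if_pos hk2, hY]
        rw [if_neg (by omega)]
      have hsum1 : ∑ k ∈ Finset.Icc 1 N, c * arSol θ (k-1) W * W k
          = ∑ k ∈ Finset.Icc 1 N, c * X (k-1) ω * ε k ω := by
        apply Finset.sum_congr rfl
        intro k hk
        rw [Finset.mem_Icc] at hk
        rw [← hXk (k-1) (by omega), hwk k hk.1 (by omega)]
      have hsum2 : ∑ k ∈ Finset.range N, (arSol θ k W)^2
          = ∑ k ∈ Finset.range N, (X k ω)^2 := by
        apply Finset.sum_congr rfl
        intro k hk
        rw [Finset.mem_range] at hk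
        rw [← hXk k (by omega)]
      have hYN : Y (N+1) ω = ε (N+1) ω := by simp [hY]
      rw [Finset.sum_Icc_succ_top (Nat.succ_le_succ (Nat.zero_le N)),
        Finset.sum_range_succ, hψdef]
      simp only []
      rw [hsum1, hsum2, ← hXk N (by omega), hYN]
      simp only [Nat.add_sub_cancel]
      congr 1
      ring
    rw [lintegral_congr hint]
    have hkey := key_indep μ Y hYmeas hindep (N+1) ψ hψmeas
    rw [hkey]
    have hYN : Y (N+1) = ε (N+1) := by simp [hY]
    have hmap : μ.map (Y (N+1)) = gaussianReal 0 σ2 := by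
      rw [hYN]; exact hεgauss (N+1) (Nat.succ_le_succ (Nat.zero_le N))
    rw [hmap]
    have hinner : ∀ w : ℕ → ℝ, ∫⁻ z, ENNReal.ofReal (ψ w z) ∂(gaussianReal 0 σ2)
        = ENNReal.ofReal (rexp ((∑ k ∈ Finset.Icc 1 N, c * arSol θ (k-1) w * w k)
          - c^2*v/2 * ∑ k ∈ Finset.range N, (arSol θ k w)^2)) := by
      intro w
      simp only [hψdef]
      rw [show (c^2*v/2 * (arSol θ N w)^2) = ((c * arSol θ N w)^2*(σ2:ℝ)/2) by
        rw [mul_pow]; ring, lint_exp_linear σ2 hσ2]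
      congr 2
      ring
    rw [lintegral_congr (fun ω => hinner _)]
    have hback : ∀ ω, ENNReal.ofReal (rexp ((∑ k ∈ Finset.Icc 1 N,
        c * arSol θ (k-1) (fun j => if j < N+1 then Y j ω else 0)
          * (if k < N+1 then Y k ω else 0))
        - c^2*v/2 * ∑ k ∈ Finset.range N,
            (arSol θ k (fun j => if j < N+1 then Y j ω else 0))^2))
        = ENNReal.ofReal (rexp ((∑ k ∈ Finset.Icc 1 N, c * X (k-1) ω * ε k ω)
          - c^2*v/2 * ∑ k ∈ Finset.range N, (X k ω)^2)) := by
      intro ω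
      congr 1
      set W : ℕ → ℝ := fun j => if j < N+1 then Y j ω else 0 with hW
      have hXk : ∀ k, k < N+1 → X k ω = arSol θ k W := by
        intro k hk
        simp only [hW, hY, apply_ite (fun f : Ω → ℝ => f ω)]
        exact X_eq_arSol_trunc θ X ε hrec hk ω
      congr 1
      congr 1
      · apply Finset.sum_congr rfl
        intro k hk
        rw [Finset.mem_Icc] at hk
        rw [← hXk (k-1) (by omega), if_pos (by omega : k < N+1)]
        simp only [hY]
        rw [if_neg (by omega)]
      · congr 1
        apply Finset.sum_congr rfl
        intro k hk
        rw [Finset.mem_range] at hk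
        rw [← hXk k (by omega)]
    rw [lintegral_congr hback]
    exact ih

set_option maxHeartbeats 1000000 in
lemma lemB {Ω : Type*} {m0 : MeasurableSpace Ω} {μ : Measure Ω} [IsProbabilityMeasure μ]
    (θ : ℝ) (X ε : ℕ → Ω → ℝ)
    (hXmeas : ∀ k, Measurable (X k)) (hεmeas : ∀ k, Measurable (ε k))
    {σ2 τ2 : NNReal} (hσ2 : σ2 ≠ 0) (hτ2 : σ2 ≤ τ2)
    (hεgauss : ∀ k, 1 ≤ k → μ.map (ε k) = gaussianReal 0 σ2)
    (hX0gauss : μ.map (X 0) = gaussianReal 0 τ2)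
    (hindep : iIndepFun
      (fun k : ℕ => if k = 0 then X 0 else ε k) μ)
    (hrec : ∀ k : ℕ, ∀ ω, X (k + 1) ω = θ * X k ω + ε (k + 1) ω)
    (b : ℝ) (hb : 0 ≤ b) (N : ℕ) :
    ∫⁻ ω, ENNReal.ofReal (rexp (-(b * ∑ k ∈ Finset.range N, (X k ω)^2))) ∂μ
      ≤ (ENNReal.ofReal ((Real.sqrt (1 + 2*b*(σ2:ℝ)))⁻¹))^N := by
  set v : ℝ := (σ2 : ℝ) with hv_def
  have hv : 0 < v := by
    exact_mod_cast pos_iff_ne_zero.mpr hσ2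
  have hτ2ne : τ2 ≠ 0 := by
    intro h
    rw [h] at hτ2
    exact hσ2 (le_antisymm hτ2 zero_le)
  have hmono : ENNReal.ofReal ((Real.sqrt (1 + 2*b*(τ2:ℝ)))⁻¹)
      ≤ ENNReal.ofReal ((Real.sqrt (1 + 2*b*v))⁻¹) := by
    apply ENNReal.ofReal_le_ofReal
    apply inv_anti₀ (Real.sqrt_pos.mpr (by positivity))
    apply Real.sqrt_le_sqrt
    have : (σ2:ℝ) ≤ (τ2:ℝ) := by exact_mod_cast hτ2
    nlinarith
  set Y : ℕ → Ω → ℝ := fun k => if k = 0 then X 0 else ε k with hY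
  have hYmeas : ∀ k, Measurable (Y k) := by
    intro k
    by_cases h : k = 0 <;> simp only [hY, h, if_true, if_false] <;>
      [exact hXmeas 0; exact hεmeas k]
  induction N with
  | zero => simp
  | succ N ih =>
    rcases Nat.eq_zero_or_pos N with hN0 | hNpos
    · subst hN0
      simp only [zero_add, Finset.sum_range_one, pow_one]
      have hmeas : Measurable fun t : ℝ => ENNReal.ofReal (rexp (-(b * t^2))) := by
        apply Measurable.ennreal_ofReal
        exact Real.measurable_exp.comp ((measurable_const.mul (measurable_id.pow_const 2)).neg)
      calc ∫⁻ ω, ENNReal.ofReal (rexp (-(b * (X 0 ω)^2))) ∂μ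
          = ∫⁻ t, ENNReal.ofReal (rexp (-(b * t^2))) ∂(μ.map (X 0)) :=
            (lintegral_map hmeas (hXmeas 0)).symm
        _ = ∫⁻ t, ENNReal.ofReal (rexp (-(b * (0 + t)^2))) ∂(gaussianReal 0 τ2) := by
            rw [hX0gauss]
            apply lintegral_congr
            intro t
            rw [zero_add]
        _ ≤ ENNReal.ofReal ((Real.sqrt (1 + 2*b*(τ2:ℝ)))⁻¹) := gauss_sq τ2 hτ2ne b 0 hb
        _ ≤ ENNReal.ofReal ((Real.sqrt (1 + 2*b*v))⁻¹) := hmono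
    · set ψ : (ℕ → ℝ) → ℝ → ℝ := fun w z =>
        rexp (-(b * ∑ k ∈ Finset.range N, (arSol θ k w)^2)) *
          rexp (-(b * ((θ * arSol θ (N-1) w) + z)^2)) with hψdef
      have hψmeas : Measurable (Function.uncurry ψ) := by
        apply Measurable.mul
        · apply Real.measurable_exp.comp
          apply Measurable.neg
          apply Measurable.const_mul
          exact (Finset.measurable_sum _ (fun k _ => (arSol_measurable θ k).pow_const 2)).comp
            measurable_fst
        · apply Real.measurable_exp.comp
          apply Measurable.neg
          apply Measurable.const_mul
          exact (((measurable_const.mul ((arSol_measurable θ (N-1)).comp measurable_fst)).add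
            measurable_snd).pow_const 2)
      have hint : ∀ ω, ENNReal.ofReal (rexp (-(b * ∑ k ∈ Finset.range (N+1), (X k ω)^2)))
          = ENNReal.ofReal (ψ (fun j => if j < N then Y j ω else 0) (Y N ω)) := by
        intro ω
        set W : ℕ → ℝ := fun j => if j < N then Y j ω else 0 with hW
        have hXk : ∀ k, k < N → X k ω = arSol θ k W := by
          intro k hk
          simp only [hW, hY, apply_ite (fun f : Ω → ℝ => f ω)]
          exact X_eq_arSol_trunc θ X ε hrec hk ω
        have hXN : X N ω = θ * arSol θ (N-1) W + Y N ω := by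
          have h1 : X N ω = θ * X (N-1) ω + ε N ω := by
            have := hrec (N-1) ω
            rwa [Nat.sub_add_cancel hNpos] at this
          rw [h1, ← hXk (N-1) (by omega)]
          congr 1
          simp only [hY]
          rw [if_neg (by omega)]
        have hsum : ∑ k ∈ Finset.range N, (X k ω)^2
            = ∑ k ∈ Finset.range N, (arSol θ k W)^2 := by
          apply Finset.sum_congr rfl
          intro k hk
          rw [Finset.mem_range] at hk
          rw [hXk k hk]
        rw [Finset.sum_range_succ, hψdef]
        simp only []
        rw [← Real.exp_add, hsum, hXN]
        congr 2
        ring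
      rw [lintegral_congr hint, key_indep μ Y hYmeas hindep N ψ hψmeas,
        show μ.map (Y N) = gaussianReal 0 σ2 by
          rw [show Y N = ε N by simp only [hY]; exact if_neg (by omega)]
          exact hεgauss N hNpos]
      have hinner : ∀ w : ℕ → ℝ, ∫⁻ z, ENNReal.ofReal (ψ w z) ∂(gaussianReal 0 σ2)
          ≤ ENNReal.ofReal (rexp (-(b * ∑ k ∈ Finset.range N, (arSol θ k w)^2)))
            * ENNReal.ofReal ((Real.sqrt (1 + 2*b*v))⁻¹) := by
        intro w
        simp only [hψdef]
        simp_rw [ENNReal.ofReal_mul (Real.exp_pos _).le]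
        rw [lintegral_const_mul' _ _ ENNReal.ofReal_ne_top]
        exact mul_le_mul_right (gauss_sq σ2 hσ2 b _ hb) _
      calc ∫⁻ ω, ∫⁻ z, ENNReal.ofReal (ψ (fun j => if j < N then Y j ω else 0) z)
            ∂(gaussianReal 0 σ2) ∂μ
          ≤ ∫⁻ ω, ENNReal.ofReal (rexp (-(b * ∑ k ∈ Finset.range N,
              (arSol θ k (fun j => if j < N then Y j ω else 0))^2)))
            * ENNReal.ofReal ((Real.sqrt (1 + 2*b*v))⁻¹) ∂μ :=
            lintegral_mono (fun ω => hinner _)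
        _ = (∫⁻ ω, ENNReal.ofReal (rexp (-(b * ∑ k ∈ Finset.range N,
              (arSol θ k (fun j => if j < N then Y j ω else 0))^2))) ∂μ)
            * ENNReal.ofReal ((Real.sqrt (1 + 2*b*v))⁻¹) :=
            lintegral_mul_const' _ _ ENNReal.ofReal_ne_top
        _ = (∫⁻ ω, ENNReal.ofReal (rexp (-(b * ∑ k ∈ Finset.range N, (X k ω)^2))) ∂μ)
            * ENNReal.ofReal ((Real.sqrt (1 + 2*b*v))⁻¹) := by
            congr 1
            apply lintegral_congr
            intro ω
            have hsum : ∑ k ∈ Finset.range N,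
                (arSol θ k (fun j => if j < N then Y j ω else 0))^2
                = ∑ k ∈ Finset.range N, (X k ω)^2 := by
              apply Finset.sum_congr rfl
              intro k hk
              rw [Finset.mem_range] at hk
              rw [show arSol θ k (fun j => if j < N then Y j ω else 0) = X k ω by
                simp only [hY, apply_ite (fun f : Ω → ℝ => f ω)]
                exact (X_eq_arSol_trunc θ X ε hrec hk ω).symm]
            rw [hsum]
        _ ≤ (ENNReal.ofReal ((Real.sqrt (1 + 2*b*v))⁻¹))^N
            * ENNReal.ofReal ((Real.sqrt (1 + 2*b*v))⁻¹) := mul_le_mul_left ih _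
        _ = (ENNReal.ofReal ((Real.sqrt (1 + 2*b*v))⁻¹))^(N+1) := (pow_succ _ _).symm

set_option maxHeartbeats 1000000 in
lemma side_bound {Ω : Type*} {m0 : MeasurableSpace Ω} {μ : Measure Ω} [IsProbabilityMeasure μ]
    (θ : ℝ) (X ε : ℕ → Ω → ℝ)
    (hXmeas : ∀ k, Measurable (X k)) (hεmeas : ∀ k, Measurable (ε k))
    {σ2 : NNReal} (hσ2 : 0 < σ2)
    (hεgauss : ∀ k, 1 ≤ k → μ.map (ε k) = gaussianReal 0 σ2)
    {τ2 : NNReal} (hτ2 : σ2 ≤ τ2) (hX0gauss : μ.map (X 0) = gaussianReal 0 τ2)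
    (hindep : iIndepFun
      (fun k : ℕ => if k = 0 then X 0 else ε k) μ)
    (hrec : ∀ k : ℕ, ∀ ω, X (k + 1) ω = θ * X k ω + ε (k + 1) ω)
    (n : ℕ) {x yx : ℝ} (hx : 0 < x) (hyx : 0 < yx)
    (hsol : (1 + yx) * Real.log (1 + yx) - yx = x ^ 2)
    (sgn : ℝ) (hsgn : sgn = 1 ∨ sgn = -1) :
    μ {ω | x * (∑ k ∈ Finset.range (n+1), (X k ω)^2)
        ≤ sgn * ∑ k ∈ Finset.Icc 1 n, X (k-1) ω * ε k ω}
      ≤ ENNReal.ofReal (rexp (-(n:ℝ) * x^2 / (2*(1+yx)))) := by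
  have hσ2ne : σ2 ≠ 0 := hσ2.ne'
  set v : ℝ := (σ2 : ℝ) with hv_def
  have hv : 0 < v := by exact_mod_cast hσ2
  have hy1 : (0:ℝ) < 1 + yx := by linarith
  have hx2 : (0:ℝ) < x^2 := by positivity
  have hsgn2 : sgn^2 = 1 := by rcases hsgn with h | h <;> rw [h] <;> norm_num
  set p : ℝ := (yx + x^2)/yx with hp_def
  set q : ℝ := (yx + x^2)/x^2 with hq_def
  have hp1 : 1 < p := by rw [hp_def, lt_div_iff₀ hyx]; linarith
  have hp0 : 0 < p := lt_trans one_pos hp1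
  have hq0 : 0 < q := by rw [hq_def]; positivity
  have hpq : p.HolderConjugate q := by
    rw [Real.holderConjugate_iff]
    constructor
    · exact hp1
    · rw [hp_def, hq_def, inv_div, inv_div, ← add_div, div_self (by positivity)]
  set t : ℝ := x/(p*v) with ht_def
  have ht : 0 < t := by rw [ht_def]; positivity
  set b : ℝ := yx/(2*v) with hb_def
  have hb : 0 ≤ b := by rw [hb_def]; positivity
  have h2bv : 1 + 2*b*v = 1 + yx := by rw [hb_def]; field_simp
  set M : Ω → ℝ := fun ω => ∑ k ∈ Finset.Icc 1 n, X (k-1) ω * ε k ω with hM_def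
  set s' : Ω → ℝ := fun ω => ∑ k ∈ Finset.range n, (X k ω)^2 with hs'_def
  set S : Ω → ℝ := fun ω => ∑ k ∈ Finset.range (n+1), (X k ω)^2 with hS_def
  have hMmeas : Measurable M :=
    Finset.measurable_sum _ (fun k _ => (hXmeas _).mul (hεmeas _))
  have hs'meas : Measurable s' :=
    Finset.measurable_sum _ (fun k _ => (hXmeas _).pow_const 2)
  have hSmeas : Measurable S :=
    Finset.measurable_sum _ (fun k _ => (hXmeas _).pow_const 2)
  set c : ℝ := sgn * (x / v) with hc_def
  set E1 : Ω → ℝ := fun ω => t * (sgn * M ω) - p*t^2*v/2 * s' ω with hE1_def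
  set E2 : Ω → ℝ := fun ω => p*t^2*v/2 * s' ω - t*x*S ω with hE2_def
  have hE1meas : Measurable E1 :=
    ((measurable_const.mul (measurable_const.mul hMmeas)).sub (measurable_const.mul hs'meas))
  have hE2meas : Measurable E2 :=
    ((measurable_const.mul hs'meas).sub (measurable_const.mul hSmeas))
  have hf : Measurable fun ω => ENNReal.ofReal (rexp (E1 ω)) :=
    (Real.measurable_exp.comp hE1meas).ennreal_ofReal
  have hg : Measurable fun ω => ENNReal.ofReal (rexp (E2 ω)) :=
    (Real.measurable_exp.comp hE2meas).ennreal_ofReal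
  -- Chernoff step
  have step1 : μ {ω | x * S ω ≤ sgn * M ω}
      ≤ ∫⁻ ω, (fun ω => ENNReal.ofReal (rexp (E1 ω)))
          ω * (fun ω => ENNReal.ofReal (rexp (E2 ω))) ω ∂μ := by
    have hfg : ∀ ω, ENNReal.ofReal (rexp (E1 ω)) * ENNReal.ofReal (rexp (E2 ω))
        = ENNReal.ofReal (rexp (t * (sgn * M ω - x * S ω))) := by
      intro ω
      rw [← ENNReal.ofReal_mul (Real.exp_pos _).le, ← Real.exp_add]
      congr 2
      simp only [hE1_def, hE2_def]
      ring
    have hmeasf : Measurable fun ω => ENNReal.ofReal (rexp (t * (sgn * M ω - x * S ω))) :=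
      (Real.measurable_exp.comp (measurable_const.mul
        ((measurable_const.mul hMmeas).sub (measurable_const.mul hSmeas)))).ennreal_ofReal
    calc μ {ω | x * S ω ≤ sgn * M ω}
        ≤ μ {ω | 1 ≤ ENNReal.ofReal (rexp (t * (sgn * M ω - x * S ω)))} := by
          apply measure_mono
          intro ω hω
          simp only [Set.mem_setOf_eq] at hω ⊢
          rw [ENNReal.one_le_ofReal]
          exact Real.one_le_exp (mul_nonneg ht.le (by linarith))
      _ ≤ ∫⁻ ω, ENNReal.ofReal (rexp (t * (sgn * M ω - x * S ω))) ∂μ := by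
          simpa using mul_meas_ge_le_lintegral₀ hmeasf.aemeasurable 1
      _ = _ := lintegral_congr (fun ω => (hfg ω).symm)
  -- Hölder
  have step2 := ENNReal.lintegral_mul_le_Lp_mul_Lq μ hpq hf.aemeasurable hg.aemeasurable
  -- the p-factor
  have step3 : ∫⁻ ω, (ENNReal.ofReal (rexp (E1 ω)))^p ∂μ ≤ 1 := by
    have hptx : t * p = x / v := by
      rw [ht_def]
      field_simp
    have heq : ∀ ω, (ENNReal.ofReal (rexp (E1 ω)))^p
        = ENNReal.ofReal (rexp ((∑ k ∈ Finset.Icc 1 n, c * X (k-1) ω * ε k ω)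
          - c^2*v/2 * ∑ k ∈ Finset.range n, (X k ω)^2)) := by
      intro ω
      rw [ENNReal.ofReal_rpow_of_pos (Real.exp_pos _), ← Real.exp_mul]
      congr 1
      have hcM : (∑ k ∈ Finset.Icc 1 n, c * X (k-1) ω * ε k ω) = c * M ω := by
        simp only [hM_def]
        rw [Finset.mul_sum]
        apply Finset.sum_congr rfl
        intro k _
        ring
      rw [hcM]
      have h1 : E1 ω * p = (t*p)*sgn*M ω - ((t*p)^2*v/2) * s' ω := by
        simp only [hE1_def]
        ring
      have hc2 : c^2 = (x/v)^2 := by rw [hc_def, mul_pow, hsgn2, one_mul]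
      rw [h1, hptx, hc2, hc_def]
      simp only [hs'_def]
      ring
    rw [lintegral_congr heq]
    exact lemA θ X ε hXmeas hεmeas hσ2ne hεgauss hindep hrec c n
  -- the q-factor
  have step4 : ∫⁻ ω, (ENNReal.ofReal (rexp (E2 ω)))^q ∂μ
      ≤ (ENNReal.ofReal ((Real.sqrt (1 + yx))⁻¹))^n := by
    have hcoef : p*t^2*v/2*q - t*x*q = -b := by
      rw [ht_def, hp_def, hq_def, hb_def]
      field_simp
      ring
    have htxq : 0 ≤ t*x*q := by positivity
    have hq2 : ∀ ω, (ENNReal.ofReal (rexp (E2 ω)))^q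
        ≤ ENNReal.ofReal (rexp (-(b * s' ω))) := by
      intro ω
      rw [ENNReal.ofReal_rpow_of_pos (Real.exp_pos _), ← Real.exp_mul]
      apply ENNReal.ofReal_le_ofReal
      apply Real.exp_le_exp.mpr
      have hSs : S ω = s' ω + (X n ω)^2 := by
        simp only [hS_def, hs'_def]
        exact Finset.sum_range_succ _ n
      have h2 : E2 ω * q = (p*t^2*v/2*q - t*x*q) * s' ω - (t*x*q) * (X n ω)^2 := by
        simp only [hE2_def]
        rw [hSs]
        ring
      rw [h2, hcoef]
      have := mul_nonneg htxq (sq_nonneg (X n ω))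
      linarith
    calc ∫⁻ ω, (ENNReal.ofReal (rexp (E2 ω)))^q ∂μ
        ≤ ∫⁻ ω, ENNReal.ofReal (rexp (-(b * s' ω))) ∂μ := lintegral_mono hq2
      _ ≤ (ENNReal.ofReal ((Real.sqrt (1 + 2*b*v))⁻¹))^n := by
          have := lemB θ X ε hXmeas hεmeas hσ2ne hτ2 hεgauss hX0gauss hindep hrec b hb n
          exact this
      _ = (ENNReal.ofReal ((Real.sqrt (1 + yx))⁻¹))^n := by rw [h2bv]
  -- combine
  have hfinal : (1:ENNReal)^(1/p) * ((ENNReal.ofReal ((Real.sqrt (1 + yx))⁻¹))^n)^(1/q)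
      = ENNReal.ofReal (rexp (-(n:ℝ) * x^2 / (2*(1+yx)))) := by
    rw [ENNReal.one_rpow, one_mul]
    have hr : (Real.sqrt (1 + yx))⁻¹ = rexp (-(Real.log (1+yx)/2)) := by
      have h1 : Real.sqrt (1 + yx) = rexp (Real.log (1+yx)/2) := by
        rw [← Real.log_sqrt hy1.le, Real.exp_log (Real.sqrt_pos.mpr hy1)]
      rw [h1, ← Real.exp_neg]
    rw [hr, ← ENNReal.ofReal_pow (Real.exp_pos _).le, ← Real.exp_nat_mul,
      ENNReal.ofReal_rpow_of_pos (Real.exp_pos _), ← Real.exp_mul]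
    congr 2
    have hlog : Real.log (1 + yx) = (x^2 + yx)/(1 + yx) := by
      rw [eq_div_iff hy1.ne']
      linarith
    rw [hlog, hq_def]
    field_simp
    ring
  calc μ {ω | x * S ω ≤ sgn * M ω}
      ≤ ∫⁻ ω, (fun ω => ENNReal.ofReal (rexp (E1 ω))) ω
          * (fun ω => ENNReal.ofReal (rexp (E2 ω))) ω ∂μ := step1
    _ ≤ (∫⁻ ω, (ENNReal.ofReal (rexp (E1 ω)))^p ∂μ)^(1/p)
        * (∫⁻ ω, (ENNReal.ofReal (rexp (E2 ω)))^q ∂μ)^(1/q) := step2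
    _ ≤ (1:ENNReal)^(1/p) * ((ENNReal.ofReal ((Real.sqrt (1 + yx))⁻¹))^n)^(1/q) := by
        apply mul_le_mul'
        · exact ENNReal.rpow_le_rpow step3 (by positivity)
        · exact ENNReal.rpow_le_rpow step4 (by positivity)
    _ = ENNReal.ofReal (rexp (-(n:ℝ) * x^2 / (2*(1+yx)))) := hfinal

set_option maxHeartbeats 1000000 in

/-- Corollary 5.2, inequality (5.8): exponential inequality for the Yule–Walker estimator of
the Gaussian autoregressive process `X_{k+1} = θ X_k + ε_{k+1}`. For all `n ≥ 1` and `x > 0`,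
`P(|θ̃_n − θ| ≥ x + |θ|) ≤ 2 exp(−n x²/(2(1 + y_x)))` where `y_x > 0` solves
`(1+y_x)log(1+y_x) − y_x = x²`. -/
theorem autoregressive_yule_walker_exponential_inequality
    {Ω : Type*} {m0 : MeasurableSpace Ω} {μ : Measure Ω} [IsProbabilityMeasure μ]
    (θ : ℝ) (X ε : ℕ → Ω → ℝ)
    (hXmeas : ∀ k, Measurable (X k)) (hεmeas : ∀ k, Measurable (ε k))
    -- the noise (ε_n)_{n ≥ 1} is i.i.d. N(0, σ²) with σ² > 0
    {σ2 : NNReal} (hσ2 : 0 < σ2)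
    (hεgauss : ∀ k, 1 ≤ k → μ.map (ε k) = gaussianReal 0 σ2)
    -- X 0 is N(0, τ²) distributed with τ² ≥ σ²
    {τ2 : NNReal} (hτ2 : σ2 ≤ τ2) (hX0gauss : μ.map (X 0) = gaussianReal 0 τ2)
    -- X 0 and the noise sequence are jointly independent
    (hindep : iIndepFun
      (fun k : ℕ => if k = 0 then X 0 else ε k) μ)
    -- the autoregressive model
    (hrec : ∀ k : ℕ, ∀ ω, X (k + 1) ω = θ * X k ω + ε (k + 1) ω)
    (n : ℕ) (hn : 1 ≤ n) {x yx : ℝ} (hx : 0 < x) (hyx : 0 < yx)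
    -- y_x is the (unique) positive solution of h(y_x) = x², h(y) = (1+y)log(1+y) − y
    (hsol : (1 + yx) * Real.log (1 + yx) - yx = x ^ 2) :
    μ {ω | x + |θ| ≤ |(∑ k ∈ Finset.Icc 1 n, X (k - 1) ω * X k ω) /
          (∑ k ∈ Finset.range (n + 1), (X k ω) ^ 2) - θ|}
      ≤ ENNReal.ofReal (2 * Real.exp (-(n : ℝ) * x ^ 2 / (2 * (1 + yx)))) := by
  set A1 : Set Ω := {ω | x * (∑ k ∈ Finset.range (n+1), (X k ω)^2)
      ≤ 1 * ∑ k ∈ Finset.Icc 1 n, X (k-1) ω * ε k ω} with hA1_def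
  set A2 : Set Ω := {ω | x * (∑ k ∈ Finset.range (n+1), (X k ω)^2)
      ≤ (-1) * ∑ k ∈ Finset.Icc 1 n, X (k-1) ω * ε k ω} with hA2_def
  have hsub : {ω | x + |θ| ≤ |(∑ k ∈ Finset.Icc 1 n, X (k - 1) ω * X k ω) /
          (∑ k ∈ Finset.range (n + 1), (X k ω) ^ 2) - θ|} ⊆ A1 ∪ A2 := by
    intro ω hω
    simp only [Set.mem_setOf_eq] at hω
    set Sv := ∑ k ∈ Finset.range (n+1), (X k ω)^2 with hSv
    set s'v := ∑ k ∈ Finset.range n, (X k ω)^2 with hs'v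
    set Mv := ∑ k ∈ Finset.Icc 1 n, X (k-1) ω * ε k ω with hMv
    have hs'nn : 0 ≤ s'v := Finset.sum_nonneg fun k _ => sq_nonneg _
    have hSnn : 0 ≤ Sv := Finset.sum_nonneg fun k _ => sq_nonneg _
    have hSs : Sv = s'v + (X n ω)^2 := by
      rw [hSv, hs'v]
      exact Finset.sum_range_succ _ n
    by_cases hS0 : Sv = 0
    · exfalso
      have hzero : ∀ k ∈ Finset.range (n+1), (X k ω)^2 = 0 :=
        (Finset.sum_eq_zero_iff_of_nonneg (fun k _ => sq_nonneg _)).mp hS0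
      have hX0 : ∀ k, k ≤ n → X k ω = 0 := by
        intro k hk
        have := hzero k (Finset.mem_range.mpr (by omega))
        exact pow_eq_zero_iff (two_ne_zero) |>.mp this
      have hnum : (∑ k ∈ Finset.Icc 1 n, X (k - 1) ω * X k ω) = 0 :=
        Finset.sum_eq_zero fun k hk => by
          rw [Finset.mem_Icc] at hk
          rw [hX0 k hk.2]
          ring
      rw [hnum, hS0] at hω
      simp only [zero_div, zero_sub, abs_neg] at hω
      linarith
    · have hSpos : 0 < Sv := lt_of_le_of_ne hSnn (Ne.symm hS0)
      have hnum : (∑ k ∈ Finset.Icc 1 n, X (k - 1) ω * X k ω) = θ * s'v + Mv := by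
        have h1 : ∀ k ∈ Finset.Icc 1 n, X (k - 1) ω * X k ω
            = θ * (X (k-1) ω)^2 + X (k-1) ω * ε k ω := by
          intro k hk
          rw [Finset.mem_Icc] at hk
          have h2 := hrec (k-1) ω
          rw [Nat.sub_add_cancel hk.1] at h2
          rw [h2]
          ring
        rw [Finset.sum_congr rfl h1, Finset.sum_add_distrib]
        congr 1
        rw [sum_Icc_one_eq_sum_range (fun k => θ * (X (k-1) ω)^2) n]
        simp only [Nat.add_sub_cancel]
        rw [hs'v, Finset.mul_sum]
      rw [hnum] at hω
      have hratio : (θ * s'v + Mv) / Sv - θ = (Mv - θ * (X n ω)^2) / Sv := by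
        field_simp
        rw [hSs]
        ring
      rw [hratio, abs_div, abs_of_pos hSpos] at hω
      have habs : |Mv - θ * (X n ω)^2| ≤ |Mv| + |θ| * (X n ω)^2 := by
        calc |Mv - θ*(X n ω)^2| ≤ |Mv| + |θ*(X n ω)^2| := abs_sub _ _
          _ = |Mv| + |θ| * (X n ω)^2 := by rw [abs_mul, abs_of_nonneg (sq_nonneg (X n ω))]
      have hXn2S : (X n ω)^2 ≤ Sv := by rw [hSs]; linarith
      have hmain : x * Sv ≤ |Mv| := by
        have h3 : (x + |θ|) * Sv ≤ |Mv - θ*(X n ω)^2| := (le_div_iff₀ hSpos).mp hω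
        nlinarith [abs_nonneg θ, mul_le_mul_of_nonneg_left hXn2S (abs_nonneg θ)]
      rcases abs_cases Mv with ⟨hM, _⟩ | ⟨hM, _⟩
      · left
        show x * Sv ≤ 1 * Mv
        rw [one_mul]
        linarith
      · right
        show x * Sv ≤ (-1) * Mv
        linarith
  calc μ {ω | x + |θ| ≤ |(∑ k ∈ Finset.Icc 1 n, X (k - 1) ω * X k ω) /
          (∑ k ∈ Finset.range (n + 1), (X k ω) ^ 2) - θ|}
      ≤ μ (A1 ∪ A2) := measure_mono hsub
    _ ≤ μ A1 + μ A2 := measure_union_le _ _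
    _ ≤ ENNReal.ofReal (rexp (-(n:ℝ) * x^2 / (2*(1+yx))))
        + ENNReal.ofReal (rexp (-(n:ℝ) * x^2 / (2*(1+yx)))) := by
        apply add_le_add
        · exact side_bound θ X ε hXmeas hεmeas hσ2 hεgauss hτ2 hX0gauss hindep hrec n
            hx hyx hsol 1 (Or.inl rfl)
        · exact side_bound θ X ε hXmeas hεmeas hσ2 hεgauss hτ2 hX0gauss hindep hrec n
            hx hyx hsol (-1) (Or.inr rfl)
    _ = ENNReal.ofReal (2 * Real.exp (-(n : ℝ) * x ^ 2 / (2 * (1 + yx)))) := by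
        rw [← ENNReal.ofReal_add (Real.exp_pos _).le (Real.exp_pos _).le]
        congr 1
        ring
end

section
/- Let (X_n) be a supercritical Galton–Watson process with X_0 = 1, offspring distribution with mean m > 1 and finite variance, conditioned on nonextinction (the extinction set is assumed negligible). Let m̃_n = X_n / X_{n−1} be the Lotka–Nagaev estimator. Assume the cumulant generating function L(t) = log E[exp(t(Y − m))] of the centered offspring variable Y − m is finite on [−c, c] with c > 0, and let I(x) = sup_{−c≤t≤c}{ xt − L(t) } and J(x) = min(I(x), I(−x)). Then for all n ≥ 1 and x > 0, P(|m̃_n − m| ≥ x) ≤ 2 E[exp(−J(x) X_{n−1})]. -/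
open MeasureTheory ProbabilityTheory Real Finset

private lemma iIndep_precomp {ι ι' Ω : Type*} {mΩ : MeasurableSpace Ω} {μ : Measure Ω}
    {m : ι' → MeasurableSpace Ω} {g : ι → ι'} (hg : Function.Injective g)
    (h : ProbabilityTheory.iIndep m μ) : ProbabilityTheory.iIndep (fun i => m (g i)) μ := by
  classical
  rw [iIndep_iff] at h ⊢
  intro S f hf
  set f' : ι' → Set Ω := Function.extend g f fun _ => Set.univ with hf'
  have happ : ∀ i, f' (g i) = f i := fun i => hg.extend_apply _ _ i
  have h1 : (⋂ i ∈ S, f i) = ⋂ j ∈ S.map ⟨g, hg⟩, f' j := by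
    ext ω
    simp only [Set.mem_iInter, Finset.mem_map, Function.Embedding.coeFn_mk]
    constructor
    · rintro hω j ⟨i, hi, rfl⟩
      rw [happ]; exact hω i hi
    · intro hω i hi
      have := hω (g i) ⟨i, hi, rfl⟩
      rwa [happ] at this
  have h2 : ∀ j ∈ S.map ⟨g, hg⟩, MeasurableSet[m j] (f' j) := by
    intro j hj
    rcases Finset.mem_map.mp hj with ⟨i, hi, rfl⟩
    simp only [Function.Embedding.coeFn_mk]
    rw [happ]; exact hf i hi
  rw [h1, h (S.map ⟨g, hg⟩) h2, Finset.prod_map]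
  exact Finset.prod_congr rfl fun i _ => by
    rw [Function.Embedding.coeFn_mk, happ]

private lemma iIndepFun_precomp {ι ι' Ω : Type*} {mΩ : MeasurableSpace Ω} {μ : Measure Ω}
    {β : Type*} [mβ : MeasurableSpace β] {f : ι' → Ω → β} {g : ι → ι'}
    (hg : Function.Injective g)
    (h : iIndepFun f μ) :
    iIndepFun (fun i => f (g i)) μ := by
  rw [iIndepFun_iff_iIndep] at h ⊢
  exact iIndep_precomp hg h

private lemma le_exp_neg_mul_csSup {p : ℝ} (hp0 : 0 ≤ p) (hp1 : p ≤ 1) (k : ℕ)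
    {s : Set ℝ} (hne : s.Nonempty) (_hbdd : BddAbove s)
    (h : ∀ y ∈ s, p ≤ Real.exp (-(k : ℝ) * y)) :
    p ≤ Real.exp (-(k : ℝ) * sSup s) := by
  rcases Nat.eq_zero_or_pos k with hk | hk
  · subst hk; simpa using hp1
  rcases hp0.eq_or_lt with hp | hp
  · exact hp ▸ (Real.exp_pos _).le
  have hk' : (0:ℝ) < k := Nat.cast_pos.mpr hk
  have hsup : sSup s ≤ -Real.log p / k := by
    refine csSup_le hne fun y hy => ?_
    have hlog : Real.log p ≤ -(k:ℝ) * y := (Real.log_le_iff_le_exp hp).mpr (h y hy)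
    rw [le_div_iff₀ hk']
    nlinarith
  calc p = Real.exp (Real.log p) := (Real.exp_log hp).symm
    _ ≤ Real.exp (-(k:ℝ) * sSup s) := by
        apply Real.exp_le_exp.mpr
        have h2 : sSup s * (k:ℝ) ≤ -Real.log p := (le_div_iff₀ hk').mp hsup
        nlinarith

private lemma gw_measurable_sup {Ω : Type*} (Y : ℕ → ℕ → Ω → ℕ) (X : ℕ → Ω → ℕ) (N : ℕ)
    (hX0 : ∀ ω, X 0 ω = 1)
    (hXrec : ∀ n : ℕ, 1 ≤ n → ∀ ω, X n ω = ∑ k ∈ Finset.range (X (n - 1) ω), Y n k ω) :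
    ∀ j, j ≤ N → Measurable[⨆ q ∈ {q : ℕ × ℕ | q.1 ≤ N},
      MeasurableSpace.comap ((fun q : ℕ × ℕ => Y q.1 q.2) q) inferInstance] (X j) := by
  set mS : MeasurableSpace Ω := ⨆ q ∈ {q : ℕ × ℕ | q.1 ≤ N},
      MeasurableSpace.comap ((fun q : ℕ × ℕ => Y q.1 q.2) q) inferInstance with hmS
  have hYmS : ∀ j i, j ≤ N → Measurable[mS] (Y j i) := by
    intro j i hj
    refine measurable_iff_comap_le.mpr ?_
    exact le_iSup₂ (f := fun (q : ℕ × ℕ) (_ : q ∈ {q : ℕ × ℕ | q.1 ≤ N}) =>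
      MeasurableSpace.comap ((fun q : ℕ × ℕ => Y q.1 q.2) q) inferInstance) ((j, i)) hj
  intro j
  induction j with
  | zero =>
    intro _
    have h0 : X 0 = fun _ => 1 := funext hX0
    rw [h0]
    exact measurable_const
  | succ j ih =>
    intro hj
    have hXj := ih (by omega)
    have hrec : ∀ ω, X (j + 1) ω = ∑ i ∈ Finset.range (X j ω), Y (j + 1) i ω := by
      intro ω
      have := hXrec (j + 1) (by omega) ω
      simpa using this
    refine measurable_to_countable' (fun v => ?_)
    have hset : X (j + 1) ⁻¹' {v}
        = ⋃ k : ℕ, (X j ⁻¹' {k}) ∩ {ω | ∑ i ∈ Finset.range k, Y (j + 1) i ω = v} := by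
      ext ω
      simp only [Set.mem_preimage, Set.mem_singleton_iff, Set.mem_iUnion,
        Set.mem_inter_iff, Set.mem_setOf_eq]
      constructor
      · intro h
        exact ⟨X j ω, rfl, by rw [← hrec ω]; exact h⟩
      · rintro ⟨k, hk, hsum⟩
        rw [hrec ω, hk]
        exact hsum
    rw [hset]
    refine MeasurableSet.iUnion fun k => (hXj (measurableSet_singleton k)).inter ?_
    have hsummeas : Measurable[mS] (fun ω => ∑ i ∈ Finset.range k, Y (j + 1) i ω) :=
      Finset.measurable_sum (Finset.range k) (fun i _ => hYmS (j + 1) i (by omega))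
    exact hsummeas (measurableSet_singleton v)

private lemma gw_tail_meas {Ω : Type*} (Y : ℕ → ℕ → Ω → ℕ) (N : ℕ) (m : ℝ) (k : ℕ) :
    Measurable[⨆ q ∈ {q : ℕ × ℕ | q.1 = N + 1},
      MeasurableSpace.comap ((fun q : ℕ × ℕ => Y q.1 q.2) q) inferInstance]
      (fun ω => ∑ i ∈ Finset.range k, ((Y (N + 1) i ω : ℝ) - m)) := by
  set mT : MeasurableSpace Ω := ⨆ q ∈ {q : ℕ × ℕ | q.1 = N + 1},
      MeasurableSpace.comap ((fun q : ℕ × ℕ => Y q.1 q.2) q) inferInstance with hmT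
  refine Finset.measurable_sum (Finset.range k) (fun i _ => ?_)
  have hYT : Measurable[mT] (Y (N + 1) i) := by
    refine measurable_iff_comap_le.mpr ?_
    exact le_iSup₂ (f := fun (q : ℕ × ℕ) (_ : q ∈ {q : ℕ × ℕ | q.1 = N + 1}) =>
      MeasurableSpace.comap ((fun q : ℕ × ℕ => Y q.1 q.2) q) inferInstance) ((N + 1, i)) rfl
  exact (measurable_from_top.comp hYT).sub measurable_const

/-- Corollary 5.3, inequality (5.11): exponential inequality for the Lotka–Nagaev estimator
`m̃_n = X_n / X_{n−1}` of the offspring mean of a supercritical Galton–Watson process: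
for all `n ≥ 1` and `x > 0`, `P(|m̃_n − m| ≥ x) ≤ 2 E[exp(−J(x) X_{n−1})]`. -/
theorem galton_watson_lotka_nagaev_exponential_inequality
    {Ω : Type*} {m0 : MeasurableSpace Ω} {μ : Measure Ω} [IsProbabilityMeasure μ]
    (Y : ℕ → ℕ → Ω → ℕ) (X : ℕ → Ω → ℕ)
    (hYmeas : ∀ n k, Measurable (Y n k)) (hXmeas : ∀ n, Measurable (X n))
    -- the offspring variables (Y_{n,k}) are i.i.d.
    (hYindep : iIndepFun (fun q : ℕ × ℕ => Y q.1 q.2) μ)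
    (hYident : ∀ n k, IdentDistrib (Y n k) (Y 0 0) μ μ)
    -- offspring mean m > 1 and finite variance
    {m : ℝ} (hm : 1 < m) (hmean : ∫ ω, (Y 0 0 ω : ℝ) ∂μ = m)
    (hYsq : MemLp (fun ω => (Y 0 0 ω : ℝ)) 2 μ)
    -- the Galton–Watson process: X_0 = 1 and X_n = Σ_{k=1}^{X_{n−1}} Y_{n,k}
    (hX0 : ∀ ω, X 0 ω = 1)
    (hXrec : ∀ n : ℕ, 1 ≤ n → ∀ ω, X n ω = ∑ k ∈ Finset.range (X (n - 1) ω), Y n k ω)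
    -- the set of extinction is negligible
    (hext : μ {ω | ∃ n, X n ω = 0} = 0)
    -- the cumulant generating function of the centered offspring variable is finite on [−c, c]
    {c : ℝ} (hc : 0 < c)
    (hLfin : ∀ t ∈ Set.Icc (-c) c,
      Integrable (fun ω => Real.exp (t * ((Y 0 0 ω : ℝ) - m))) μ)
    (L : ℝ → ℝ) (hLdef : ∀ t, L t = Real.log (∫ ω, Real.exp (t * ((Y 0 0 ω : ℝ) - m)) ∂μ))
    -- `I` is its Fenchel–Legendre transform and `J(x) = min(I(x), I(−x))`
    (I : ℝ → ℝ) (hIdef : ∀ z, I z = sSup ((fun t => z * t - L t) '' Set.Icc (-c) c))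
    (J : ℝ → ℝ) (hJdef : ∀ z, J z = min (I z) (I (-z)))
    (n : ℕ) (hn : 1 ≤ n) {x : ℝ} (hx : 0 < x) :
    μ {ω | x ≤ |(X n ω : ℝ) / (X (n - 1) ω : ℝ) - m|}
      ≤ ENNReal.ofReal (2 * ∫ ω, Real.exp (-J x * (X (n - 1) ω : ℝ)) ∂μ) := by
  classical
  obtain ⟨N, rfl⟩ : ∃ N, n = N + 1 := ⟨n - 1, (Nat.succ_pred_eq_of_pos hn).symm⟩
  simp only [Nat.add_sub_cancel]
  -- centered offspring variables of generation N+1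
  set Z : ℕ → Ω → ℝ := fun i ω => ((Y (N + 1) i ω : ℝ) - m) with hZdef
  set Z0 : Ω → ℝ := fun ω => ((Y 0 0 ω : ℝ) - m) with hZ0def
  have hZmeas : ∀ i, Measurable (Z i) := fun i =>
    (measurable_from_top.comp (hYmeas (N + 1) i)).sub measurable_const
  have hinj : Function.Injective (fun i : ℕ => ((N + 1 : ℕ), i)) := fun a b hab => by
    simpa using hab
  have hYrow : iIndepFun
      (fun i : ℕ => (fun q : ℕ × ℕ => Y q.1 q.2) ((N + 1 : ℕ), i)) μ :=
    iIndepFun_precomp (f := fun q : ℕ × ℕ => Y q.1 q.2)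
      (g := fun i : ℕ => ((N + 1 : ℕ), i)) hinj hYindep
  have hZindep : iIndepFun Z μ :=
    hYrow.comp (fun _ (y : ℕ) => (y : ℝ) - m)
      (fun _ => measurable_from_top.sub measurable_const)
  have hZident : ∀ i, IdentDistrib (Z i) Z0 μ μ := fun i =>
    (hYident (N + 1) i).comp
      ((measurable_from_top : Measurable fun y : ℕ => (y : ℝ)).sub measurable_const)
  -- integrability facts
  have hY0int : Integrable (fun ω => (Y 0 0 ω : ℝ)) μ :=
    memLp_one_iff_integrable.mp (hYsq.mono_exponent (by norm_num))
  have hZ0int : Integrable Z0 μ := hY0int.sub (integrable_const m)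
  have hZ0mean : ∫ ω, Z0 ω ∂μ = 0 := by
    rw [hZ0def]
    rw [integral_sub hY0int (integrable_const m), hmean, integral_const]
    simp
  have hint0 : ∀ t ∈ Set.Icc (-c) c, Integrable (fun ω => Real.exp (t * Z0 ω)) μ :=
    hLfin
  have hmgf0 : ∀ t ∈ Set.Icc (-c) c, mgf Z0 μ t = Real.exp (L t) := by
    intro t ht
    have hpos : 0 < mgf Z0 μ t := mgf_pos (hint0 t ht)
    rw [hLdef t]
    exact (Real.exp_log hpos).symm
  have hLnonneg : ∀ t ∈ Set.Icc (-c) c, 0 ≤ L t := by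
    intro t ht
    have hintlin : Integrable (fun ω => 1 + t * Z0 ω) μ :=
      (integrable_const 1).add (hZ0int.const_mul t)
    have hmono : ∫ ω, (1 + t * Z0 ω) ∂μ ≤ ∫ ω, Real.exp (t * Z0 ω) ∂μ :=
      integral_mono hintlin (hint0 t ht) (fun ω => by
        have := Real.add_one_le_exp (t * Z0 ω); linarith)
    have h1 : (1 : ℝ) ≤ mgf Z0 μ t := by
      have : ∫ ω, (1 + t * Z0 ω) ∂μ = 1 := by
        rw [integral_add (integrable_const 1) (hZ0int.const_mul t), integral_const,
          integral_const_mul, hZ0mean]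
        simp
      rw [mgf, ← this]
      exact hmono
    rw [hLdef t]
    exact Real.log_nonneg h1
  have hL0 : L 0 = 0 := by
    rw [hLdef 0]
    simp
  -- sums of centered variables
  set Sf : ℕ → Ω → ℝ := fun k ω => ∑ i ∈ Finset.range k, Z i ω with hSfdef
  have hZint : ∀ i, ∀ t ∈ Set.Icc (-c) c,
      Integrable (fun ω => Real.exp (t * Z i ω)) μ := by
    intro i t ht
    have hid : IdentDistrib (fun ω => Real.exp (t * Z i ω))
        (fun ω => Real.exp (t * Z0 ω)) μ μ :=
      (hZident i).comp ((measurable_id.const_mul t).exp)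
    exact hid.integrable_iff.mpr (hint0 t ht)
  have hSint : ∀ (k : ℕ), ∀ t ∈ Set.Icc (-c) c,
      Integrable (fun ω => Real.exp (t * Sf k ω)) μ := by
    intro k t ht
    have h := hZindep.integrable_exp_mul_sum (t := t) hZmeas
      (s := Finset.range k) (fun i _ => hZint i t ht)
    have hfun : (fun ω => Real.exp (t * Sf k ω))
        = (fun ω => Real.exp (t * (∑ i ∈ Finset.range k, Z i) ω)) := by
      funext ω
      rw [Finset.sum_apply]
    rw [hfun]
    exact h
  have hSmgf : ∀ (k : ℕ), ∀ t ∈ Set.Icc (-c) c,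
      mgf (Sf k) μ t = Real.exp ((k : ℝ) * L t) := by
    intro k t ht
    have hmgfZ : ∀ i, mgf (Z i) μ t = mgf Z0 μ t := by
      intro i
      exact ((hZident i).comp ((measurable_id.const_mul t).exp)).integral_eq
    have heq : mgf (Sf k) μ t = mgf (∑ i ∈ Finset.range k, Z i) μ t := by
      congr 1
      funext ω
      exact (Finset.sum_apply _ _ _).symm
    rw [heq, hZindep.mgf_sum hZmeas (Finset.range k)]
    rw [Finset.prod_congr rfl (fun i _ => hmgfZ i), Finset.prod_const, Finset.card_range,
      hmgf0 t ht, ← Real.exp_nat_mul]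
  -- properties of I and J
  have hbdd : ∀ z : ℝ, BddAbove ((fun t => z * t - L t) '' Set.Icc (-c) c) := by
    intro z
    refine ⟨|z| * c, ?_⟩
    rintro y ⟨t, ht, rfl⟩
    have habs : |t| ≤ c := abs_le.mpr ⟨ht.1, ht.2⟩
    have h1 : z * t ≤ |z| * c := by
      calc z * t ≤ |z * t| := le_abs_self _
        _ = |z| * |t| := abs_mul _ _
        _ ≤ |z| * c := by gcongr
    have h2 := hLnonneg t ht
    simp only
    linarith
  have hne : ∀ z : ℝ, ((fun t => z * t - L t) '' Set.Icc (-c) c).Nonempty :=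
    fun z => Set.Nonempty.image _ ⟨0, by constructor <;> linarith⟩
  have hI0 : ∀ z, 0 ≤ I z := by
    intro z
    rw [hIdef]
    have hmem : (0 : ℝ) ∈ (fun t => z * t - L t) '' Set.Icc (-c) c :=
      ⟨0, ⟨by linarith, by linarith⟩, by simp [hL0]⟩
    exact le_csSup (hbdd z) hmem
  have hJ0 : 0 ≤ J x := by rw [hJdef]; exact le_min (hI0 x) (hI0 (-x))
  have hJIx : J x ≤ I x := by rw [hJdef]; exact min_le_left _ _
  have hJIx' : J x ≤ I (-x) := by rw [hJdef]; exact min_le_right _ _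
  -- Chernoff bounds
  have key : ∀ (k : ℕ) (z : ℝ) (E : Set Ω),
      (∀ t ∈ Set.Icc (-c) c, (μ E).toReal ≤ Real.exp (-(k : ℝ) * (z * t - L t))) →
      (μ E).toReal ≤ Real.exp (-(k : ℝ) * I z) := by
    intro k z E hE
    rw [hIdef]
    refine le_exp_neg_mul_csSup ENNReal.toReal_nonneg ?_ k (hne z) (hbdd z) ?_
    · exact ENNReal.toReal_mono (by norm_num) prob_le_one
    · rintro y ⟨t, ht, rfl⟩
      exact hE t ht
  have hprob1 : ∀ E : Set Ω, (μ E).toReal ≤ 1 :=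
    fun E => ENNReal.toReal_mono (by norm_num) prob_le_one
  have hchernoff_up : ∀ k : ℕ,
      (μ {ω | (k : ℝ) * x ≤ Sf k ω}).toReal ≤ Real.exp (-(k : ℝ) * I x) := by
    intro k
    refine key k x _ (fun t ht => ?_)
    rcases le_or_gt 0 t with h0 | h0
    · have hcb := measure_ge_le_exp_mul_mgf (X := Sf k) (μ := μ) ((k : ℝ) * x) h0
        (hSint k t ht)
      rw [hSmgf k t ht, ← Real.exp_add] at hcb
      refine hcb.trans (le_of_eq ?_)
      congr 1
      ring
    · have h1 : x * t - L t ≤ 0 := by nlinarith [hLnonneg t ht]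
      refine (hprob1 _).trans (Real.one_le_exp ?_)
      nlinarith [(Nat.cast_nonneg k : (0:ℝ) ≤ (k:ℝ))]
  have hchernoff_lo : ∀ k : ℕ,
      (μ {ω | Sf k ω ≤ -((k : ℝ) * x)}).toReal ≤ Real.exp (-(k : ℝ) * I (-x)) := by
    intro k
    refine key k (-x) _ (fun t ht => ?_)
    rcases le_or_gt t 0 with h0 | h0
    · have hcb := measure_le_le_exp_mul_mgf (X := Sf k) (μ := μ) (-((k : ℝ) * x)) h0
        (hSint k t ht)
      rw [hSmgf k t ht, ← Real.exp_add] at hcb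
      refine hcb.trans (le_of_eq ?_)
      congr 1
      ring
    · have h1 : -x * t - L t ≤ 0 := by nlinarith [hLnonneg t ht]
      refine (hprob1 _).trans (Real.one_le_exp ?_)
      nlinarith [(Nat.cast_nonneg k : (0:ℝ) ≤ (k:ℝ))]
  -- independence of generation ≤ N from generation N+1
  have h_le : ∀ q : ℕ × ℕ,
      MeasurableSpace.comap ((fun q : ℕ × ℕ => Y q.1 q.2) q) inferInstance ≤ m0 :=
    fun q => measurable_iff_comap_le.mp (hYmeas q.1 q.2)
  have hST : Disjoint {q : ℕ × ℕ | q.1 ≤ N} {q : ℕ × ℕ | q.1 = N + 1} := by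
    rw [Set.disjoint_left]
    rintro q hq hq'
    simp only [Set.mem_setOf_eq] at hq hq'
    omega
  have hindepST : Indep
      (⨆ q ∈ {q : ℕ × ℕ | q.1 ≤ N},
        MeasurableSpace.comap ((fun q : ℕ × ℕ => Y q.1 q.2) q) inferInstance)
      (⨆ q ∈ {q : ℕ × ℕ | q.1 = N + 1},
        MeasurableSpace.comap ((fun q : ℕ × ℕ => Y q.1 q.2) q) inferInstance) μ :=
    indep_iSup_of_disjoint h_le ((iIndepFun_iff_iIndep _ _ _).mp hYindep) hST
  have hXmS := gw_measurable_sup Y X N hX0 hXrec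
  have hSfmT : ∀ k : ℕ, Measurable[⨆ q ∈ {q : ℕ × ℕ | q.1 = N + 1},
      MeasurableSpace.comap ((fun q : ℕ × ℕ => Y q.1 q.2) q) inferInstance] (Sf k) :=
    fun k => gw_tail_meas Y N m k
  have hindep_events : ∀ (k : ℕ) (B : Set Ω),
      MeasurableSet[⨆ q ∈ {q : ℕ × ℕ | q.1 = N + 1},
        MeasurableSpace.comap ((fun q : ℕ × ℕ => Y q.1 q.2) q) inferInstance] B →
      μ ((X N ⁻¹' {k}) ∩ B) = μ (X N ⁻¹' {k}) * μ B := by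
    intro k B hB
    exact (Indep_iff _ _ _).mp hindepST _ _
      (hXmS N le_rfl (measurableSet_singleton k)) hB
  -- events and decomposition
  set A : ℕ → Set Ω := fun k => X N ⁻¹' {k} with hA
  set g : ℕ → ENNReal := fun k => ENNReal.ofReal (Real.exp (-J x * (k : ℝ))) with hgdef
  set Bp : ℕ → Set Ω := fun k => {ω | (k : ℝ) * x ≤ Sf k ω} with hBp
  set Bm : ℕ → Set Ω := fun k => {ω | Sf k ω ≤ -((k : ℝ) * x)} with hBm
  have hBpmT : ∀ k, MeasurableSet[⨆ q ∈ {q : ℕ × ℕ | q.1 = N + 1},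
      MeasurableSpace.comap ((fun q : ℕ × ℕ => Y q.1 q.2) q) inferInstance] (Bp k) :=
    fun k => (hSfmT k) (measurableSet_Ici (a := (k : ℝ) * x))
  have hBmmT : ∀ k, MeasurableSet[⨆ q ∈ {q : ℕ × ℕ | q.1 = N + 1},
      MeasurableSpace.comap ((fun q : ℕ × ℕ => Y q.1 q.2) q) inferInstance] (Bm k) :=
    fun k => (hSfmT k) (measurableSet_Iic (a := -((k : ℝ) * x)))
  have hBple : ∀ k, μ (Bp k) ≤ g k := by
    intro k
    rw [hgdef]
    rw [ENNReal.le_ofReal_iff_toReal_le (measure_ne_top μ _) (Real.exp_pos _).le]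
    refine (hchernoff_up k).trans (Real.exp_le_exp.mpr ?_)
    have h1 : J x ≤ I x := hJIx
    nlinarith [(Nat.cast_nonneg k : (0:ℝ) ≤ (k:ℝ))]
  have hBmle : ∀ k, μ (Bm k) ≤ g k := by
    intro k
    rw [hgdef]
    rw [ENNReal.le_ofReal_iff_toReal_le (measure_ne_top μ _) (Real.exp_pos _).le]
    refine (hchernoff_lo k).trans (Real.exp_le_exp.mpr ?_)
    have h1 : J x ≤ I (-x) := hJIx'
    nlinarith [(Nat.cast_nonneg k : (0:ℝ) ≤ (k:ℝ))]
  have hg0 : g 0 = 1 := by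
    rw [hgdef]
    simp
  -- relation between X (N+1) and Sf on A k
  have hXsum : ∀ k ω, X N ω = k → (X (N + 1) ω : ℝ) = Sf k ω + (k : ℝ) * m := by
    intro k ω hk
    have h1 : X (N + 1) ω = ∑ i ∈ Finset.range k, Y (N + 1) i ω := by
      have := hXrec (N + 1) (by omega) ω
      simpa [hk] using this
    have h2 : Sf k ω = (∑ i ∈ Finset.range k, (Y (N + 1) i ω : ℝ)) - (k : ℝ) * m := by
      rw [hSfdef]
      simp only [hZdef]
      rw [Finset.sum_sub_distrib, Finset.sum_const, Finset.card_range, nsmul_eq_mul]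
    rw [h1, h2, Nat.cast_sum]
    ring
  set Ep : Set Ω := {ω | x ≤ (X (N + 1) ω : ℝ) / (X N ω : ℝ) - m} with hEp
  set Em : Set Ω := {ω | (X (N + 1) ω : ℝ) / (X N ω : ℝ) - m ≤ -x} with hEm
  have hEpk : ∀ k : ℕ, μ (Ep ∩ A k) ≤ μ (A k) * g k := by
    intro k
    rcases Nat.eq_zero_or_pos k with hk0 | hkpos
    · subst hk0
      have : Ep ∩ A 0 = ∅ := by
        ext ω
        simp only [Set.mem_inter_iff, Set.mem_empty_iff_false, iff_false, not_and]
        intro hωE hωA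
        have hk : X N ω = 0 := hωA
        rw [hEp] at hωE
        simp only [Set.mem_setOf_eq, hk] at hωE
        rw [Nat.cast_zero, div_zero] at hωE
        linarith
      rw [this]
      simp
    · have hkR : (0:ℝ) < (k : ℝ) := Nat.cast_pos.mpr hkpos
      have hEA : Ep ∩ A k = A k ∩ Bp k := by
        ext ω
        simp only [Set.mem_inter_iff, hEp, hBp, Set.mem_setOf_eq, hA, Set.mem_preimage,
          Set.mem_singleton_iff]
        constructor
        · rintro ⟨hE, hk⟩
          refine ⟨hk, ?_⟩
          rw [hXsum k ω hk, hk] at hE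
          rw [le_sub_iff_add_le, le_div_iff₀ hkR] at hE
          nlinarith
        · rintro ⟨hk, hB⟩
          refine ⟨?_, hk⟩
          rw [hXsum k ω hk, hk]
          rw [le_sub_iff_add_le, le_div_iff₀ hkR]
          nlinarith
      rw [hEA, hindep_events k (Bp k) (hBpmT k)]
      exact mul_le_mul_right (hBple k) _
  have hEmk : ∀ k : ℕ, μ (Em ∩ A k) ≤ μ (A k) * g k := by
    intro k
    rcases Nat.eq_zero_or_pos k with hk0 | hkpos
    · subst hk0
      rw [hg0, mul_one]
      exact measure_mono Set.inter_subset_right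
    · have hkR : (0:ℝ) < (k : ℝ) := Nat.cast_pos.mpr hkpos
      have hEA : Em ∩ A k = A k ∩ Bm k := by
        ext ω
        simp only [Set.mem_inter_iff, hEm, hBm, Set.mem_setOf_eq, hA, Set.mem_preimage,
          Set.mem_singleton_iff]
        constructor
        · rintro ⟨hE, hk⟩
          refine ⟨hk, ?_⟩
          rw [hXsum k ω hk, hk] at hE
          rw [sub_le_iff_le_add, div_le_iff₀ hkR] at hE
          nlinarith
        · rintro ⟨hk, hB⟩
          refine ⟨?_, hk⟩
          rw [hXsum k ω hk, hk]
          rw [sub_le_iff_le_add, div_le_iff₀ hkR]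
          nlinarith
      rw [hEA, hindep_events k (Bm k) (hBmmT k)]
      exact mul_le_mul_right (hBmle k) _
  -- summation
  have hsubadd : ∀ E : Set Ω, (∀ k, μ (E ∩ A k) ≤ μ (A k) * g k) →
      μ E ≤ ∑' k, μ (A k) * g k := by
    intro E hE
    have hcover : E ⊆ ⋃ k : ℕ, E ∩ A k := by
      intro ω hω
      exact Set.mem_iUnion.mpr ⟨X N ω, hω, rfl⟩
    calc μ E ≤ μ (⋃ k : ℕ, E ∩ A k) := measure_mono hcover
      _ ≤ ∑' k, μ (E ∩ A k) := measure_iUnion_le _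
      _ ≤ ∑' k, μ (A k) * g k := ENNReal.tsum_le_tsum hE
  -- identify the sum with the integral
  have hintexp : Integrable (fun ω => Real.exp (-J x * (X N ω : ℝ))) μ := by
    refine Integrable.mono' (integrable_const 1)
      ((measurable_from_top.comp (hXmeas N)).const_mul (-J x)).exp.aestronglyMeasurable
      (ae_of_all _ fun ω => ?_)
    rw [Real.norm_eq_abs, abs_of_pos (Real.exp_pos _)]
    refine Real.exp_le_one_iff.mpr ?_
    have := (Nat.cast_nonneg (X N ω) : (0:ℝ) ≤ (X N ω : ℝ))
    nlinarith
  have hsum_eq : (∑' k, μ (A k) * g k)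
      = ENNReal.ofReal (∫ ω, Real.exp (-J x * (X N ω : ℝ)) ∂μ) := by
    rw [ofReal_integral_eq_lintegral_ofReal hintexp
      (ae_of_all _ fun ω => (Real.exp_pos _).le)]
    have hF : Measurable (fun k : ℕ => ENNReal.ofReal (Real.exp (-J x * (k : ℝ)))) :=
      measurable_from_top
    have h1 : ∫⁻ ω, ENNReal.ofReal (Real.exp (-J x * (X N ω : ℝ))) ∂μ
        = ∫⁻ k, ENNReal.ofReal (Real.exp (-J x * (k : ℝ))) ∂(Measure.map (X N) μ) :=
      (lintegral_map hF (hXmeas N)).symm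
    rw [h1, lintegral_countable' _]
    refine tsum_congr fun k => ?_
    rw [Measure.map_apply (hXmeas N) (measurableSet_singleton k), mul_comm]
  have hintnn : 0 ≤ ∫ ω, Real.exp (-J x * (X N ω : ℝ)) ∂μ :=
    integral_nonneg fun ω => (Real.exp_pos _).le
  -- final assembly
  have hEsub : {ω | x ≤ |(X (N + 1) ω : ℝ) / (X N ω : ℝ) - m|} ⊆ Ep ∪ Em := by
    intro ω hω
    have hω' : x ≤ |(X (N + 1) ω : ℝ) / (X N ω : ℝ) - m| := hω
    rcases le_abs.mp hω' with h | h
    · exact Or.inl h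
    · exact Or.inr (by rw [hEm]; simp only [Set.mem_setOf_eq]; linarith)
  calc μ {ω | x ≤ |(X (N + 1) ω : ℝ) / (X N ω : ℝ) - m|}
      ≤ μ (Ep ∪ Em) := measure_mono hEsub
    _ ≤ μ Ep + μ Em := measure_union_le _ _
    _ ≤ (∑' k, μ (A k) * g k) + (∑' k, μ (A k) * g k) :=
        add_le_add (hsubadd Ep hEpk) (hsubadd Em hEmk)
    _ = ENNReal.ofReal (∫ ω, Real.exp (-J x * (X N ω : ℝ)) ∂μ)
        + ENNReal.ofReal (∫ ω, Real.exp (-J x * (X N ω : ℝ)) ∂μ) := by rw [hsum_eq]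
    _ = ENNReal.ofReal (2 * ∫ ω, Real.exp (-J x * (X N ω : ℝ)) ∂μ) := by
        rw [two_mul, ENNReal.ofReal_add hintnn hintnn]
end

section
/- Let (M_n) be a locally square integrable real martingale with M_0 = 0, and for real t and n ≥ 0 set V_n(t) = exp( t M_n − (t²/2)([M]_n + ⟨M⟩_n) ). Then for all real t, (V_n(t))_{n≥0} is a positive supermartingale and E[V_n(t)] ≤ 1 for all n ≥ 0. -/
open MeasureTheory ProbabilityTheory Real Finset

private lemma bt_key_aux : ∀ u : ℝ, 1 ≤ (1 + u + u ^ 2 / 2) * Real.exp (u ^ 2 / 2 - u) := by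
  have hderiv : ∀ u : ℝ, HasDerivAt (fun u : ℝ => (1 + u + u ^ 2 / 2) * Real.exp (u ^ 2 / 2 - u))
      (Real.exp (u ^ 2 / 2 - u) * (u * (u ^ 2 + u + 2) / 2)) u := by
    intro u
    have h1 : HasDerivAt (fun u : ℝ => 1 + u + u ^ 2 / 2) (1 + u) u := by
      have := ((hasDerivAt_id u).const_add 1).add (((hasDerivAt_pow 2 u)).div_const 2)
      refine this.congr_deriv ?_; push_cast; ring
    have h2 : HasDerivAt (fun u : ℝ => u ^ 2 / 2 - u) (u - 1) u := by
      have := (((hasDerivAt_pow 2 u)).div_const 2).sub (hasDerivAt_id u)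
      refine this.congr_deriv ?_; push_cast; ring
    have := h1.mul h2.exp
    refine this.congr_deriv ?_
    ring
  have hcont : Continuous (fun u : ℝ => (1 + u + u ^ 2 / 2) * Real.exp (u ^ 2 / 2 - u)) := by
    continuity
  have hmono : MonotoneOn (fun u : ℝ => (1 + u + u ^ 2 / 2) * Real.exp (u ^ 2 / 2 - u))
      (Set.Ici 0) := by
    refine monotoneOn_of_deriv_nonneg (convex_Ici 0) hcont.continuousOn ?_ ?_
    · intro x _
      exact (hderiv x).differentiableAt.differentiableWithinAt
    · intro x hx
      rw [interior_Ici] at hx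
      rw [(hderiv x).deriv]
      have hx0 : (0:ℝ) ≤ x := le_of_lt hx
      have he := Real.exp_pos (x ^ 2 / 2 - x)
      have hq : (0:ℝ) < x ^ 2 + x + 2 := by nlinarith [sq_nonneg (x + 1/2)]
      nlinarith [mul_nonneg he.le (mul_nonneg hx0 hq.le)]
  have hanti : AntitoneOn (fun u : ℝ => (1 + u + u ^ 2 / 2) * Real.exp (u ^ 2 / 2 - u))
      (Set.Iic 0) := by
    refine antitoneOn_of_deriv_nonpos (convex_Iic 0) hcont.continuousOn ?_ ?_
    · intro x _
      exact (hderiv x).differentiableAt.differentiableWithinAt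
    · intro x hx
      rw [interior_Iic] at hx
      rw [(hderiv x).deriv]
      have hx0 : x ≤ 0 := le_of_lt hx
      have he := Real.exp_pos (x ^ 2 / 2 - x)
      have hq : (0:ℝ) < x ^ 2 + x + 2 := by nlinarith [sq_nonneg (x + 1/2)]
      nlinarith [mul_nonneg he.le (mul_nonneg (neg_nonneg.2 hx0) hq.le)]
  intro u
  have h0 : (fun u : ℝ => (1 + u + u ^ 2 / 2) * Real.exp (u ^ 2 / 2 - u)) 0 = 1 := by
    norm_num
  rcases le_total 0 u with h | h
  · have := hmono (Set.mem_Ici.2 le_rfl) (Set.mem_Ici.2 h) h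
    rw [h0] at this; exact this
  · have := hanti (Set.mem_Iic.2 h) (Set.mem_Iic.2 le_rfl) h
    rw [h0] at this; exact this

private lemma bt_key_ineq (u : ℝ) : Real.exp (u - u ^ 2 / 2) ≤ 1 + u + u ^ 2 / 2 := by
  have h := bt_key_aux u
  have he : Real.exp (u - u ^ 2 / 2) * Real.exp (u ^ 2 / 2 - u) = 1 := by
    rw [← Real.exp_add]; norm_num
  nlinarith [Real.exp_pos (u ^ 2 / 2 - u)]

private lemma bt_half_bound (u : ℝ) : u - u ^ 2 / 2 ≤ 1 / 2 := by nlinarith [sq_nonneg (u - 1)]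

/-- Lemma B.1: for a locally square integrable real martingale `M` with `M 0 = 0` and
`V_n(t) = exp(t M_n − (t²/2)([M]_n + ⟨M⟩_n))`, for every real `t`, `(V_n(t))` is a positive
supermartingale with `E[V_n(t)] ≤ 1`. -/
theorem exp_martingale_total_plus_predictable_qv_supermartingale
    {Ω : Type*} {m0 : MeasurableSpace Ω} {μ : Measure Ω} [IsProbabilityMeasure μ]
    {ℱ : Filtration ℕ m0} {M : ℕ → Ω → ℝ}
    (hM : Martingale M ℱ μ) (hM0 : M 0 = 0) (hMsq : ∀ n, MemLp (M n) 2 μ)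
    (t : ℝ)
    (V : ℕ → Ω → ℝ)
    (hV : ∀ n ω, V n ω = Real.exp (t * M n ω - t ^ 2 / 2 *
      ((∑ k ∈ Finset.Icc 1 n, (M k ω - M (k - 1) ω) ^ 2) +
        ∑ k ∈ Finset.Icc 1 n,
          (μ[fun ω' => (M k ω' - M (k - 1) ω') ^ 2 | ℱ (k - 1)]) ω))) :
    (∀ n ω, 0 < V n ω) ∧ Supermartingale V ℱ μ ∧ ∀ n, (∫ ω, V n ω ∂μ) ≤ 1 := by
  have hM0' : ∀ ω, M 0 ω = 0 := fun ω => congrFun hM0 ω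
  -- positivity
  have hpos : ∀ n ω, 0 < V n ω := fun n ω => by rw [hV]; exact Real.exp_pos _
  -- measurability of each `V n` w.r.t. `ℱ n`
  have hmeasM : ∀ k n : ℕ, k ≤ n → StronglyMeasurable[ℱ n] (M k) :=
    fun k n hk => (hM.stronglyAdapted k).mono (ℱ.mono hk)
  have hmeasV : ∀ n, StronglyMeasurable[ℱ n] (V n) := by
    intro n
    have hVn : V n = fun ω => Real.exp (t * M n ω - t ^ 2 / 2 *
        ((∑ k ∈ Finset.Icc 1 n, (M k ω - M (k - 1) ω) ^ 2) +
          ∑ k ∈ Finset.Icc 1 n,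
            (μ[fun ω' => (M k ω' - M (k - 1) ω') ^ 2 | ℱ (k - 1)]) ω)) :=
      funext fun ω => hV n ω
    rw [hVn]
    refine Real.continuous_exp.comp_stronglyMeasurable ?_
    refine StronglyMeasurable.sub (stronglyMeasurable_const.mul (hmeasM n n le_rfl)) ?_
    refine stronglyMeasurable_const.mul (StronglyMeasurable.add ?_ ?_)
    · refine Finset.stronglyMeasurable_fun_sum _ fun k hk => ?_
      have hk' : k ≤ n := (Finset.mem_Icc.1 hk).2
      exact ((hmeasM k n hk').sub (hmeasM (k-1) n (le_trans (Nat.sub_le k 1) hk'))).pow 2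
    · refine Finset.stronglyMeasurable_fun_sum _ fun k hk => ?_
      have hk' : k ≤ n := (Finset.mem_Icc.1 hk).2
      exact stronglyMeasurable_condExp.mono (ℱ.mono (le_trans (Nat.sub_le k 1) hk'))
  -- telescoping
  have htel : ∀ n ω, M n ω = ∑ k ∈ Finset.Icc 1 n, (M k ω - M (k - 1) ω) := by
    intro n ω
    induction n with
    | zero => simp [hM0' ω]
    | succ n ih =>
      rw [Finset.sum_Icc_succ_top (Nat.succ_le_succ (Nat.zero_le n)), ← ih]
      simp
  -- a.e. nonnegativity of the conditional expectations
  have hc_nonneg : ∀ᵐ ω ∂μ, ∀ k : ℕ,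
      0 ≤ (μ[fun ω' => (M k ω' - M (k - 1) ω') ^ 2 | ℱ (k - 1)]) ω := by
    rw [ae_all_iff]
    intro k
    have h := condExp_nonneg (μ := μ) (m := ℱ (k-1))
      (f := fun ω' => (M k ω' - M (k - 1) ω') ^ 2)
      (Filter.Eventually.of_forall fun ω => sq_nonneg _)
    filter_upwards [h] with ω hω using hω
  -- a.e. bound on `V n`
  have hVbound : ∀ n : ℕ, ∀ᵐ ω ∂μ, ‖V n ω‖ ≤ Real.exp (n / 2) := by
    intro n
    filter_upwards [hc_nonneg] with ω hω
    rw [hV, Real.norm_eq_abs, abs_of_pos (Real.exp_pos _), Real.exp_le_exp]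
    have hC : 0 ≤ ∑ k ∈ Finset.Icc 1 n,
        (μ[fun ω' => (M k ω' - M (k - 1) ω') ^ 2 | ℱ (k - 1)]) ω :=
      Finset.sum_nonneg fun k _ => hω k
    have hsum : t * M n ω - t ^ 2 / 2 * ∑ k ∈ Finset.Icc 1 n, (M k ω - M (k - 1) ω) ^ 2
        = ∑ k ∈ Finset.Icc 1 n,
          (t * (M k ω - M (k - 1) ω) - (t * (M k ω - M (k - 1) ω)) ^ 2 / 2) := by
      rw [htel n ω, Finset.mul_sum, Finset.mul_sum, ← Finset.sum_sub_distrib]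
      exact Finset.sum_congr rfl fun k _ => by ring
    have hle : t * M n ω - t ^ 2 / 2 * ∑ k ∈ Finset.Icc 1 n, (M k ω - M (k - 1) ω) ^ 2
        ≤ (n : ℝ) / 2 := by
      rw [hsum]
      calc ∑ k ∈ Finset.Icc 1 n,
            (t * (M k ω - M (k - 1) ω) - (t * (M k ω - M (k - 1) ω)) ^ 2 / 2)
          ≤ ∑ _k ∈ Finset.Icc 1 n, (1/2 : ℝ) :=
            Finset.sum_le_sum fun k _ => bt_half_bound _
        _ = (n : ℝ) / 2 := by
            rw [Finset.sum_const, Nat.card_Icc]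
            simp [nsmul_eq_mul]
            ring
    nlinarith [mul_nonneg (mul_nonneg (sq_nonneg t) (by norm_num : (0:ℝ) ≤ 1/2)) hC]
  have hVint : ∀ n, Integrable (V n) μ := fun n =>
    Integrable.mono' (integrable_const (Real.exp (n / 2)))
      ((hmeasV n).mono (ℱ.le n)).aestronglyMeasurable (hVbound n)
  -- the one-step supermartingale inequality
  have hstep : ∀ n, μ[V (n + 1) | ℱ n] ≤ᵐ[μ] V n := by
    intro n
    set Δ : Ω → ℝ := fun ω => M (n + 1) ω - M n ω with hΔdef
    set Δsq : Ω → ℝ := fun ω' => (M (n + 1) ω' - M n ω') ^ 2 with hΔsqdef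
    set cn : Ω → ℝ := μ[Δsq | ℱ n] with hcndef
    have hΔ2 : MemLp Δ 2 μ := (hMsq (n+1)).sub (hMsq n)
    have hΔint : Integrable Δ μ := (hM.integrable (n+1)).sub (hM.integrable n)
    have hΔsqint : Integrable Δsq μ := hΔ2.integrable_sq
    set A : Ω → ℝ := fun ω => V n ω * Real.exp (-(t ^ 2 / 2) * cn ω) with hAdef
    set B : Ω → ℝ := fun ω => Real.exp (t * Δ ω - (t * Δ ω) ^ 2 / 2) with hBdef
    have hfact : V (n + 1) = A * B := by
      funext ω
      show V (n+1) ω = A ω * B ω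
      simp only [hAdef, hBdef, hcndef, hΔdef, hΔsqdef]
      rw [hV, hV, ← Real.exp_add, ← Real.exp_add, Real.exp_eq_exp,
        Finset.sum_Icc_succ_top (Nat.succ_le_succ (Nat.zero_le n)),
        Finset.sum_Icc_succ_top (Nat.succ_le_succ (Nat.zero_le n))]
      simp only [Nat.add_sub_cancel]
      ring
    have hBbound : ∀ ω, ‖B ω‖ ≤ Real.exp (1 / 2) := by
      intro ω
      rw [hBdef]
      simp only
      rw [Real.norm_eq_abs, abs_of_pos (Real.exp_pos _), Real.exp_le_exp]
      exact bt_half_bound _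
    have hΔmeas : StronglyMeasurable Δ := by
      rw [hΔdef]
      exact (((hM.stronglyAdapted (n+1)).mono (ℱ.le (n+1))).sub ((hM.stronglyAdapted n).mono (ℱ.le n)))
    have hBmeas : StronglyMeasurable B := by
      rw [hBdef]
      have hcB : Continuous fun x : ℝ => Real.exp (t * x - (t * x) ^ 2 / 2) :=
        Real.continuous_exp.comp (((continuous_const.mul continuous_id).sub
          (((continuous_const.mul continuous_id).pow 2).div_const 2)))
      exact hcB.comp_stronglyMeasurable hΔmeas
    have hBint : Integrable B μ :=
      Integrable.mono' (integrable_const (Real.exp (1 / 2))) hBmeas.aestronglyMeasurable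
        (Filter.Eventually.of_forall hBbound)
    have hAmeas : StronglyMeasurable[ℱ n] A :=
      (hmeasV n).mul (Real.continuous_exp.comp_stronglyMeasurable
        (stronglyMeasurable_const.mul stronglyMeasurable_condExp))
    have hABint : Integrable (A * B) μ := hfact ▸ hVint (n+1)
    have hpull : μ[V (n + 1) | ℱ n] =ᵐ[μ] A * μ[B | ℱ n] := by
      rw [hfact]
      exact condExp_mul_of_stronglyMeasurable_left hAmeas hABint hBint
    -- bound the conditional expectation of B
    set g : Ω → ℝ := (fun _ => (1:ℝ)) + t • Δ + (t ^ 2 / 2) • Δsq with hgdef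
    have hgpt : ∀ ω, g ω = 1 + t * Δ ω + t ^ 2 / 2 * Δsq ω := fun ω => rfl
    have hBg : ∀ ω, B ω ≤ g ω := by
      intro ω
      rw [hgpt, show Δsq ω = Δ ω ^ 2 from rfl]
      have h := bt_key_ineq (t * Δ ω)
      nlinarith [h]
    have hgint : Integrable g μ :=
      ((integrable_const (1:ℝ)).add (hΔint.smul t)).add (hΔsqint.smul (t ^ 2 / 2))
    have hBle : μ[B | ℱ n] ≤ᵐ[μ] μ[g | ℱ n] :=
      condExp_mono hBint hgint (Filter.Eventually.of_forall hBg)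
    have hΔ0 : μ[Δ | ℱ n] =ᵐ[μ] 0 := by
      have h1 : μ[Δ | ℱ n] =ᵐ[μ] μ[M (n+1) | ℱ n] - μ[M n | ℱ n] := by
        have := condExp_sub (μ := μ) (m := ℱ n) (hM.integrable (n+1)) (hM.integrable n)
        exact this
      have h2 : μ[M (n+1) | ℱ n] =ᵐ[μ] M n := hM.condExp_ae_eq (Nat.le_succ n)
      have h3 : μ[M n | ℱ n] = M n :=
        condExp_of_stronglyMeasurable (ℱ.le n) (hM.stronglyAdapted n) (hM.integrable n)
      filter_upwards [h1, h2] with ω h1ω h2ω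
      simp only [Pi.sub_apply, Pi.zero_apply] at *
      rw [h1ω, h2ω, h3]
      ring
    have hgcond : μ[g | ℱ n] =ᵐ[μ] fun ω => 1 + t ^ 2 / 2 * cn ω := by
      have e1 : μ[g | ℱ n] =ᵐ[μ]
          μ[(fun _ => (1:ℝ)) + t • Δ | ℱ n] + μ[(t ^ 2 / 2) • Δsq | ℱ n] := by
        rw [hgdef]
        exact condExp_add ((integrable_const (1:ℝ)).add (hΔint.smul t)) (hΔsqint.smul _) _
      have e2 : μ[(fun _ => (1:ℝ)) + t • Δ | ℱ n] =ᵐ[μ]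
          μ[(fun _ => (1:ℝ)) | ℱ n] + μ[t • Δ | ℱ n] :=
        condExp_add (integrable_const _) (hΔint.smul t) _
      have e3 : μ[(fun _ => (1:ℝ)) | ℱ n] = fun _ => (1:ℝ) := condExp_const (ℱ.le n) _
      have e4 : μ[t • Δ | ℱ n] =ᵐ[μ] t • μ[Δ | ℱ n] := condExp_smul t Δ _
      have e5 : μ[(t ^ 2 / 2) • Δsq | ℱ n] =ᵐ[μ] (t ^ 2 / 2) • μ[Δsq | ℱ n] :=
        condExp_smul (t ^ 2 / 2) Δsq _
      filter_upwards [e1, e2, e4, e5, hΔ0] with ω h1 h2 h4 h5 h0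
      simp only [Pi.add_apply, Pi.smul_apply, smul_eq_mul, Pi.zero_apply] at h1 h2 h4 h5 h0 ⊢
      rw [h1, h2, h4, h5, congrFun e3 ω, h0, ← hcndef]
      ring
    filter_upwards [hpull, hBle, hgcond, hc_nonneg] with ω hpullω hBleω hgcondω _
    have hA0 : 0 ≤ A ω := le_of_lt (mul_pos (hpos n ω) (Real.exp_pos _))
    have h1 : (μ[V (n + 1) | ℱ n]) ω = A ω * (μ[B | ℱ n]) ω := by
      rw [hpullω]; rfl
    have h2 : (μ[B | ℱ n]) ω ≤ 1 + t ^ 2 / 2 * cn ω := le_of_le_of_eq hBleω hgcondω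
    have h3 : A ω * (μ[B | ℱ n]) ω ≤ A ω * (1 + t ^ 2 / 2 * cn ω) :=
      mul_le_mul_of_nonneg_left h2 hA0
    have hE : Real.exp (-(t ^ 2 / 2) * cn ω) * Real.exp (t ^ 2 / 2 * cn ω) = 1 := by
      rw [← Real.exp_add, show -(t ^ 2 / 2) * cn ω + t ^ 2 / 2 * cn ω = 0 by ring,
        Real.exp_zero]
    have hexp : 1 + t ^ 2 / 2 * cn ω ≤ Real.exp (t ^ 2 / 2 * cn ω) := by
      linarith [Real.add_one_le_exp (t ^ 2 / 2 * cn ω)]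
    have h4 : A ω * (1 + t ^ 2 / 2 * cn ω) ≤ V n ω := by
      have h5 : A ω * (1 + t ^ 2 / 2 * cn ω) ≤ A ω * Real.exp (t ^ 2 / 2 * cn ω) :=
        mul_le_mul_of_nonneg_left hexp hA0
      have h6 : A ω * Real.exp (t ^ 2 / 2 * cn ω) = V n ω := by
        rw [hAdef]
        simp only
        rw [mul_assoc, hE, mul_one]
      linarith
    rw [h1]
    exact le_trans h3 h4
  have hsuper : Supermartingale V ℱ μ :=
    supermartingale_nat (fun n => hmeasV n) hVint hstep
  refine ⟨hpos, hsuper, ?_⟩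
  intro n
  have hV0 : V 0 = fun _ => (1:ℝ) := by
    funext ω
    rw [hV]
    simp [hM0' ω]
  have h := hsuper.setIntegral_le (Nat.zero_le n) (MeasurableSet.univ)
  rw [Measure.restrict_univ] at h
  calc (∫ ω, V n ω ∂μ) ≤ ∫ ω, V 0 ω ∂μ := h
    _ = 1 := by rw [hV0]; simp
end

section
/- Let (M_n) be a locally square integrable real martingale with M_0 = 0 that is heavy on left, and for real t and n ≥ 0 set W_n(t) = exp( t M_n − (t²/2)[M]_n ). Then for all t ≥ 0, (W_n(t))_{n≥0} is a positive supermartingale and E[W_n(t)] ≤ 1 for all n ≥ 0. -/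
open MeasureTheory ProbabilityTheory Real Finset

/-- The truncated version `T_a(x) = min(|x|, a) · sign(x)` of a real number. -/
noncomputable def truncAt (a : ℝ) (x : ℝ) : ℝ := min |x| a * Real.sign x

/-- A martingale `M` is heavy on left if all its increments are conditionally heavy on left:
for all `n ≥ 1` and all `a > 0`, `E[T_a(ΔM_n) | ℱ_{n−1}] ≤ 0` almost surely. -/
def Martingale.IsHeavyOnLeft {Ω : Type*} {m0 : MeasurableSpace Ω} (μ : Measure Ω)
    (ℱ : Filtration ℕ m0) (M : ℕ → Ω → ℝ) : Prop :=
  ∀ n : ℕ, 1 ≤ n → ∀ a : ℝ, 0 < a →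
    ∀ᵐ ω ∂μ, (μ[fun ω' => truncAt a (M n ω' - M (n - 1) ω') | ℱ (n - 1)]) ω ≤ 0

namespace HOLAux

open Set Filter Topology

/-! ### Elementary analytic facts -/

noncomputable def Efn (t a : ℝ) : ℝ := Real.exp (-(t * a + t ^ 2 / 2 * a ^ 2))
noncomputable def Pfn (t a : ℝ) : ℝ := (t + t ^ 2 * a) * Efn t a
noncomputable def wfn (t a : ℝ) : ℝ := ((t + t ^ 2 * a) ^ 2 - t ^ 2) * Efn t a
noncomputable def Phifn (t a : ℝ) : ℝ := (1 - Efn t a) - a * Pfn t a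
noncomputable def gfn (t x : ℝ) : ℝ := Real.sign x * (1 - Efn t |x|)

lemma hasDerivAt_Efn (t a : ℝ) :
    HasDerivAt (fun a => Efn t a) (Efn t a * -(t + t ^ 2 * a)) a := by
  have h : HasDerivAt (fun a : ℝ => -(t * a + t ^ 2 / 2 * a ^ 2)) (-(t + t ^ 2 * a)) a := by
    have h1 : HasDerivAt (fun a : ℝ => t * a) t a := by
      simpa using (hasDerivAt_id a).const_mul t
    have h2 : HasDerivAt (fun a : ℝ => t ^ 2 / 2 * a ^ 2) (t ^ 2 / 2 * (2 * a ^ 1)) a :=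
      (hasDerivAt_pow 2 a).const_mul (t ^ 2 / 2)
    have := (h1.add h2).neg
    refine this.congr_deriv ?_
    ring
  exact h.exp

lemma hasDerivAt_Pfn (t a : ℝ) :
    HasDerivAt (fun a => Pfn t a) (-(wfn t a)) a := by
  have h1 : HasDerivAt (fun a : ℝ => t + t ^ 2 * a) (t ^ 2) a := by
    simpa using ((hasDerivAt_id a).const_mul (t ^ 2)).const_add t
  have h2 := h1.mul (hasDerivAt_Efn t a)
  refine h2.congr_deriv ?_
  simp only [wfn, Efn]
  ring

lemma hasDerivAt_Phifn (t a : ℝ) :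
    HasDerivAt (fun a => Phifn t a) (a * wfn t a) a := by
  have h1 := (hasDerivAt_Efn t a).const_sub 1
  have h2 := (hasDerivAt_id a).mul (hasDerivAt_Pfn t a)
  have h3 := h1.sub h2
  refine h3.congr_deriv ?_
  simp only [Pfn, Efn, id_eq]
  ring

lemma continuous_wfn (t : ℝ) : Continuous (fun a => wfn t a) := by
  unfold wfn Efn
  fun_prop

lemma Efn_pos (t a : ℝ) : 0 < Efn t a := Real.exp_pos _

lemma Efn_le_one {t a : ℝ} (ht : 0 ≤ t) (ha : 0 ≤ a) : Efn t a ≤ 1 := by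
  rw [Efn, ← Real.exp_zero]
  apply Real.exp_le_exp.2
  nlinarith

lemma wfn_nonneg {t a : ℝ} (ht : 0 ≤ t) (ha : 0 ≤ a) : 0 ≤ wfn t a := by
  apply mul_nonneg _ (Efn_pos t a).le
  nlinarith [mul_nonneg (mul_nonneg (mul_nonneg ht ht) ht) ha, sq_nonneg (t ^ 2 * a)]

lemma tendsto_Pfn {t : ℝ} (ht : 0 < t) : Tendsto (fun a => Pfn t a) atTop (𝓝 0) := by
  have hb : Tendsto (fun a : ℝ => (t + t ^ 2 * a) * Real.exp (-(t * a))) atTop (𝓝 0) := by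
    have hta : Tendsto (fun a : ℝ => t * a) atTop atTop :=
      Tendsto.const_mul_atTop ht tendsto_id
    have h1 : Tendsto (fun a : ℝ => t * Real.exp (-(t * a))) atTop (𝓝 0) := by
      simpa using (Real.tendsto_exp_neg_atTop_nhds_zero.comp hta).const_mul t
    have h2 : Tendsto (fun a : ℝ => t ^ 2 * a * Real.exp (-(t * a))) atTop (𝓝 0) := by
      have h3 : Tendsto (fun a : ℝ => (t * a) ^ 1 * Real.exp (-(t * a))) atTop (𝓝 0) :=
        (tendsto_pow_mul_exp_neg_atTop_nhds_zero 1).comp hta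
      have h4 := h3.const_mul t
      have : (fun a : ℝ => t * ((t * a) ^ 1 * Real.exp (-(t * a)))) =
          fun a : ℝ => t ^ 2 * a * Real.exp (-(t * a)) := by
        funext a; ring
      rw [this] at h4
      simpa using h4
    have := h1.add h2
    simp only [add_zero] at this
    apply this.congr
    intro a; ring
  apply squeeze_zero' (f := fun a => Pfn t a)
  · filter_upwards [eventually_ge_atTop (0 : ℝ)] with a ha
    exact mul_nonneg (by nlinarith) (Efn_pos t a).le
  · filter_upwards [eventually_ge_atTop (0 : ℝ)] with a ha
    simp only [Pfn, Efn]
    have h1 : (0:ℝ) ≤ t + t ^ 2 * a := by nlinarith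
    have h2 : Real.exp (-(t * a + t ^ 2 / 2 * a ^ 2)) ≤ Real.exp (-(t * a)) := by
      apply Real.exp_le_exp.2
      nlinarith
    exact mul_le_mul_of_nonneg_left h2 h1
  · exact hb

lemma integrableOn_wfn {t : ℝ} (ht : 0 < t) : IntegrableOn (fun a => wfn t a) (Ioi 0) := by
  have htd : Tendsto (fun a => -Pfn t a) atTop (𝓝 0) := by
    simpa using (tendsto_Pfn ht).neg
  apply integrableOn_Ioi_deriv_of_nonneg' (g := fun a => -Pfn t a) (l := 0)
  · intro x hx
    have h := (hasDerivAt_Pfn t x).neg; simp only [neg_neg] at h; exact h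
  · intro x hx
    exact wfn_nonneg ht.le hx.le
  · exact htd

lemma integral_wfn_Ioi {t : ℝ} (ht : 0 < t) {u : ℝ} (hu : 0 ≤ u) :
    ∫ a in Ioi u, wfn t a = Pfn t u := by
  have htd : Tendsto (fun a => -Pfn t a) atTop (𝓝 0) := by
    simpa using (tendsto_Pfn ht).neg
  have := integral_Ioi_of_hasDerivAt_of_nonneg' (g := fun a => -Pfn t a)
    (g' := fun a => wfn t a) (a := u) (l := 0)
    (fun x hx => by have h := (hasDerivAt_Pfn t x).neg; simp only [neg_neg] at h; exact h)
    (fun x hx => wfn_nonneg ht.le (hu.trans hx.le))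
    htd
  simpa using this

lemma integral_aw_Ioc (t : ℝ) {u : ℝ} (hu : 0 ≤ u) :
    ∫ a in Ioc 0 u, a * wfn t a = Phifn t u := by
  have hint : IntervalIntegrable (fun a => a * wfn t a) volume 0 u :=
    (continuous_id.mul (continuous_wfn t)).intervalIntegrable 0 u
  have h := intervalIntegral.integral_eq_sub_of_hasDerivAt
    (f := fun a => Phifn t a) (f' := fun a => a * wfn t a)
    (fun x _ => hasDerivAt_Phifn t x) hint
  have h0 : Phifn t 0 = 0 := by simp [Phifn, Pfn, Efn]
  rw [intervalIntegral.integral_of_le hu] at h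
  rw [h]
  show Phifn t u - Phifn t 0 = Phifn t u
  rw [h0, sub_zero]

lemma rep_min {t : ℝ} (ht : 0 < t) {u : ℝ} (hu : 0 ≤ u) :
    ∫ a in Ioi 0, min u a * wfn t a = 1 - Efn t u := by
  rcases eq_or_lt_of_le hu with h0 | hu'
  · have : ∀ a ∈ Ioi (0:ℝ), min u a * wfn t a = 0 := by
      intro a ha
      rw [← h0, min_eq_left (le_of_lt ha)]
      ring
    rw [setIntegral_congr_fun measurableSet_Ioi this]
    simp [← h0, Efn]
  · have hsplit : Ioc 0 u ∪ Ioi u = Ioi (0:ℝ) := Ioc_union_Ioi_eq_Ioi hu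
    have hint1 : IntegrableOn (fun a => min u a * wfn t a) (Ioc 0 u) :=
      ((continuous_const.min continuous_id).mul (continuous_wfn t)).integrableOn_Ioc
    have hint2 : IntegrableOn (fun a => min u a * wfn t a) (Ioi u) := by
      apply Integrable.mono' (((integrableOn_wfn ht).mono_set
        (Ioi_subset_Ioi hu)).const_mul u)
      · exact (((continuous_const.min continuous_id).mul
          (continuous_wfn t)).aestronglyMeasurable).restrict
      · filter_upwards [ae_restrict_mem measurableSet_Ioi] with a ha
        have haw : 0 ≤ wfn t a := wfn_nonneg ht.le (hu.trans ha.le)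
        have : min u a = u := min_eq_left ha.le
        rw [Real.norm_eq_abs, this, abs_of_nonneg (mul_nonneg hu haw)]
    rw [← hsplit, setIntegral_union (Ioc_disjoint_Ioi le_rfl) measurableSet_Ioi hint1 hint2]
    have e1 : ∫ a in Ioc 0 u, min u a * wfn t a = ∫ a in Ioc 0 u, a * wfn t a := by
      apply setIntegral_congr_fun measurableSet_Ioc
      intro a ha
      dsimp only
      rw [min_eq_right ha.2]
    have e2 : ∫ a in Ioi u, min u a * wfn t a = ∫ a in Ioi u, u * wfn t a := by
      apply setIntegral_congr_fun measurableSet_Ioi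
      intro a ha
      dsimp only
      rw [min_eq_left ha.le]
    rw [e1, e2, integral_aw_Ioc t hu, integral_const_mul, integral_wfn_Ioi ht hu]
    simp only [Phifn]
    ring

lemma rep_trunc {t : ℝ} (ht : 0 < t) (x : ℝ) :
    ∫ a in Ioi 0, truncAt a x * wfn t a = gfn t x := by
  have : ∀ a : ℝ, truncAt a x * wfn t a = Real.sign x * (min |x| a * wfn t a) := by
    intro a; simp only [truncAt]; ring
  simp_rw [this]
  rw [integral_const_mul, rep_min ht (abs_nonneg x), gfn]

lemma abs_sign_le (x : ℝ) : |Real.sign x| ≤ 1 := by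
  rcases Real.sign_apply_eq x with h | h | h <;> rw [h] <;> norm_num

lemma abs_truncAt_le_abs {a : ℝ} (ha : 0 ≤ a) (x : ℝ) : |truncAt a x| ≤ |x| := by
  rw [truncAt, abs_mul, abs_of_nonneg (le_min (abs_nonneg x) ha)]
  calc min |x| a * |Real.sign x| ≤ min |x| a * 1 :=
        mul_le_mul_of_nonneg_left (abs_sign_le x) (le_min (abs_nonneg x) ha)
    _ ≤ |x| := by rw [mul_one]; exact min_le_left _ _

lemma abs_truncAt_le {a : ℝ} (ha : 0 ≤ a) (x : ℝ) : |truncAt a x| ≤ a := by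
  rw [truncAt, abs_mul, abs_of_nonneg (le_min (abs_nonneg x) ha)]
  calc min |x| a * |Real.sign x| ≤ min |x| a * 1 :=
        mul_le_mul_of_nonneg_left (abs_sign_le x) (le_min (abs_nonneg x) ha)
    _ ≤ a := by rw [mul_one]; exact min_le_right _ _

lemma measurable_realSign : Measurable Real.sign := by
  have h : Real.sign = fun r : ℝ => if r < 0 then (-1 : ℝ) else if 0 < r then 1 else 0 := by
    funext r; rfl
  rw [h]
  exact Measurable.ite (measurableSet_lt measurable_id measurable_const) measurable_const
    (Measurable.ite (measurableSet_lt measurable_const measurable_id) measurable_const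
      measurable_const)

lemma measurable_gfn (t : ℝ) : Measurable (gfn t) := by
  apply measurable_realSign.mul
  apply Measurable.const_sub
  unfold Efn
  fun_prop

lemma abs_gfn_le_one {t : ℝ} (ht : 0 ≤ t) (x : ℝ) : |gfn t x| ≤ 1 := by
  rw [gfn, abs_mul]
  have h0 : 0 ≤ 1 - Efn t |x| := by linarith [Efn_le_one ht (abs_nonneg x)]
  have h1 : abs (1 - Efn t |x|) ≤ 1 := by
    rw [abs_of_nonneg h0]
    linarith [Efn_pos t |x|]
  exact le_trans (mul_le_mul (abs_sign_le x) h1 (abs_nonneg _) zero_le_one) (by norm_num)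

lemma key_pointwise {t : ℝ} (ht : 0 ≤ t) (x : ℝ) :
    Real.exp (t * x - t ^ 2 / 2 * x ^ 2) ≤ 1 + gfn t x := by
  rcases lt_trichotomy x 0 with hx | hx | hx
  · have hs : Real.sign x = -1 := Real.sign_of_neg hx
    have ha : |x| = -x := abs_of_neg hx
    rw [gfn, hs, ha, Efn]
    have : -(t * -x + t ^ 2 / 2 * (-x) ^ 2) = t * x - t ^ 2 / 2 * x ^ 2 := by ring
    rw [this]
    apply le_of_eq
    ring
  · subst hx
    simp [gfn, Efn]
  · have hs : Real.sign x = 1 := Real.sign_of_pos hx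
    have ha : |x| = x := abs_of_pos hx
    rw [gfn, hs, ha, one_mul, Efn]
    have hcosh := Real.cosh_le_exp_half_sq (t * x)
    rw [Real.cosh_eq] at hcosh
    have hexp : Real.exp ((t * x) ^ 2 / 2) = Real.exp (t ^ 2 / 2 * x ^ 2) := by
      congr 1; ring
    rw [hexp] at hcosh
    have hc : (0 : ℝ) < Real.exp (t ^ 2 / 2 * x ^ 2) := Real.exp_pos _
    have h1 : Real.exp (t * x - t ^ 2 / 2 * x ^ 2) * Real.exp (t ^ 2 / 2 * x ^ 2)
        = Real.exp (t * x) := by rw [← Real.exp_add]; congr 1; ring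
    have h2 : Real.exp (-(t * x + t ^ 2 / 2 * x ^ 2)) * Real.exp (t ^ 2 / 2 * x ^ 2)
        = Real.exp (-(t * x)) := by rw [← Real.exp_add]; congr 1; ring
    nlinarith [Real.exp_pos (-(t * x + t ^ 2 / 2 * x ^ 2)),
      Real.exp_pos (t * x - t ^ 2 / 2 * x ^ 2)]

lemma exponent_le_half (t x : ℝ) : t * x - t ^ 2 / 2 * x ^ 2 ≤ 1 / 2 := by
  nlinarith [sq_nonneg (t * x - 1)]

/-! ### Probabilistic part -/

variable {Ω : Type*} {m0 : MeasurableSpace Ω} {μ : Measure Ω} [IsProbabilityMeasure μ]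
  {ℱ : Filtration ℕ m0} {M : ℕ → Ω → ℝ}

lemma condexp_gfn_nonpos (hM : Martingale M ℱ μ)
    (hheavy : Martingale.IsHeavyOnLeft μ ℱ M) {t : ℝ} (ht : 0 ≤ t) (n : ℕ) :
    μ[fun ω => gfn t (M (n + 1) ω - M n ω) | ℱ n] ≤ᵐ[μ] 0 := by
  rcases eq_or_lt_of_le ht with h0 | ht'
  · have : (fun ω => gfn t (M (n + 1) ω - M n ω)) = 0 := by
      funext ω
      simp [gfn, Efn, ← h0]
    rw [this, condExp_zero]
  · -- main case `0 < t`
    set D : Ω → ℝ := fun ω => M (n + 1) ω - M n ω with hD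
    have hDmeas : Measurable D :=
      ((hM.stronglyMeasurable (n + 1)).mono (ℱ.le _)).measurable.sub
        ((hM.stronglyMeasurable n).mono (ℱ.le _)).measurable
    have hDint : Integrable D μ := (hM.integrable (n + 1)).sub (hM.integrable n)
    have hgmeas : AEStronglyMeasurable (fun ω => gfn t (D ω)) μ :=
      ((measurable_gfn t).comp hDmeas).aestronglyMeasurable
    have hgint : Integrable (fun ω => gfn t (D ω)) μ := by
      apply Integrable.mono' (integrable_const (1 : ℝ)) hgmeas
      exact ae_of_all _ fun ω => by
        rw [Real.norm_eq_abs]; exact abs_gfn_le_one ht (D ω)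
    have key : ∀ s : Set Ω, MeasurableSet[ℱ n] s → ∫ ω in s, gfn t (D ω) ∂μ ≤ 0 := by
      intro s hs
      have hs0 : MeasurableSet s := ℱ.le n s hs
      have hwint := integrableOn_wfn ht'
      have hFmeas : AEStronglyMeasurable
          (Function.uncurry fun ω a => truncAt a (D ω) * wfn t a)
          ((μ.restrict s).prod (volume.restrict (Set.Ioi (0:ℝ)))) := by
        apply Measurable.aestronglyMeasurable
        show Measurable fun p : Ω × ℝ => truncAt p.2 (D p.1) * wfn t p.2
        simp only [truncAt]
        exact (((hDmeas.comp measurable_fst).abs.min measurable_snd).mul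
          (measurable_realSign.comp (hDmeas.comp measurable_fst))).mul
          ((continuous_wfn t).measurable.comp measurable_snd)
      have hFint : Integrable (Function.uncurry fun ω a => truncAt a (D ω) * wfn t a)
          ((μ.restrict s).prod (volume.restrict (Set.Ioi (0:ℝ)))) := by
        rw [integrable_prod_iff hFmeas]
        constructor
        · apply ae_of_all
          intro ω
          apply Integrable.mono' (hwint.const_mul |D ω|)
          · apply Measurable.aestronglyMeasurable
            show Measurable fun a : ℝ => truncAt a (D ω) * wfn t a
            simp only [truncAt]
            exact ((measurable_const.min measurable_id).mul measurable_const).mul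
              (continuous_wfn t).measurable
          · filter_upwards [ae_restrict_mem measurableSet_Ioi] with a ha
            have haw : 0 ≤ wfn t a := wfn_nonneg ht'.le ha.le
            simp only [Function.uncurry_apply_pair]
            rw [Real.norm_eq_abs, abs_mul, abs_of_nonneg haw]
            exact mul_le_mul_of_nonneg_right (abs_truncAt_le_abs ha.le (D ω)) haw
        · have hC : ∫ a in Set.Ioi (0:ℝ), wfn t a = Pfn t 0 := integral_wfn_Ioi ht' le_rfl
          apply Integrable.mono' ((hDint.abs.mul_const (Pfn t 0)).restrict)
          · exact hFmeas.norm.integral_prod_right'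
          · apply ae_of_all
            intro ω
            simp only [Function.uncurry_apply_pair]
            have hnn : 0 ≤ ∫ a in Set.Ioi (0:ℝ), ‖truncAt a (D ω) * wfn t a‖ :=
              integral_nonneg fun a => norm_nonneg _
            rw [Real.norm_eq_abs, abs_of_nonneg hnn]
            have hb : ∫ a in Set.Ioi (0:ℝ), ‖truncAt a (D ω) * wfn t a‖
                ≤ ∫ a in Set.Ioi (0:ℝ), |D ω| * wfn t a := by
              apply integral_mono_of_nonneg (ae_of_all _ fun a => norm_nonneg _)
                (hwint.const_mul |D ω|)
              filter_upwards [ae_restrict_mem measurableSet_Ioi] with a ha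
              have haw : 0 ≤ wfn t a := wfn_nonneg ht'.le ha.le
              rw [Real.norm_eq_abs, abs_mul, abs_of_nonneg haw]
              exact mul_le_mul_of_nonneg_right (abs_truncAt_le_abs ha.le (D ω)) haw
            rw [integral_const_mul, hC] at hb
            exact hb
      have hrep : ∀ ω, gfn t (D ω) = ∫ a in Set.Ioi (0:ℝ), truncAt a (D ω) * wfn t a :=
        fun ω => (rep_trunc ht' (D ω)).symm
      calc ∫ ω in s, gfn t (D ω) ∂μ
          = ∫ ω in s, (∫ a in Set.Ioi (0:ℝ), truncAt a (D ω) * wfn t a) ∂μ := by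
            simp_rw [hrep]
        _ = ∫ a in Set.Ioi (0:ℝ), (∫ ω in s, truncAt a (D ω) * wfn t a ∂μ) := by
            exact integral_integral_swap hFint
        _ ≤ 0 := by
            apply integral_nonpos_of_ae
            filter_upwards [ae_restrict_mem measurableSet_Ioi] with a ha
            have htr_int : Integrable (fun ω => truncAt a (D ω)) μ := by
              apply Integrable.mono' (integrable_const a)
              · apply Measurable.aestronglyMeasurable
                show Measurable fun ω => truncAt a (D ω)
                simp only [truncAt]
                exact (hDmeas.abs.min measurable_const).mul
                  (measurable_realSign.comp hDmeas)
              · exact ae_of_all _ fun ω => by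
                  rw [Real.norm_eq_abs]; exact abs_truncAt_le ha.le _
            have hhe := hheavy (n + 1) (Nat.le_add_left 1 n) a ha
            simp only [Nat.add_sub_cancel] at hhe
            have hle : ∫ ω in s, truncAt a (D ω) ∂μ ≤ 0 := by
              have heq := setIntegral_condExp (ℱ.le n) htr_int hs
              rw [← heq]
              exact integral_nonpos_of_ae (ae_restrict_of_ae hhe)
            rw [integral_mul_const]
            simp only [Pi.zero_apply]
            nlinarith [wfn_nonneg ht'.le ha.le]
    -- from the set-integral inequality to the conditional expectation
    set h := μ[fun ω => gfn t (D ω)|ℱ n] with hh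
    have hmeas : Measurable[ℱ n] h := stronglyMeasurable_condExp.measurable
    set s₀ : Set Ω := {ω | 0 < h ω} with hs₀def
    have hs₀m : MeasurableSet[ℱ n] s₀ := hmeas measurableSet_Ioi
    have hs₀0 : MeasurableSet s₀ := ℱ.le n _ hs₀m
    have h1 : ∫ ω in s₀, h ω ∂μ ≤ 0 := by
      rw [hh, setIntegral_condExp (ℱ.le n) hgint hs₀m]
      exact key s₀ hs₀m
    have h2 : 0 ≤ ∫ ω in s₀, h ω ∂μ :=
      setIntegral_nonneg hs₀0 fun ω hω => le_of_lt hω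
    have h3 : ∫ ω in s₀, h ω ∂μ = 0 := le_antisymm h1 h2
    have hnn : 0 ≤ᵐ[μ.restrict s₀] h :=
      (ae_restrict_iff' hs₀0).2 (ae_of_all _ fun ω hω => le_of_lt hω)
    have h4 : h =ᵐ[μ.restrict s₀] 0 :=
      (integral_eq_zero_iff_of_nonneg_ae hnn integrable_condExp.integrableOn).mp h3
    have h5 : μ s₀ = 0 := by
      have hne : μ.restrict s₀ {ω | h ω ≠ 0} = 0 := by
        have h4' := h4
        rw [Filter.EventuallyEq, ae_iff] at h4'
        simpa using h4'
      have hsub : s₀ ⊆ {ω | h ω ≠ 0} := fun ω hω => ne_of_gt hω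
      have h7 : μ.restrict s₀ s₀ ≤ μ.restrict s₀ {ω | h ω ≠ 0} := measure_mono hsub
      rw [hne] at h7
      have h6 : μ.restrict s₀ s₀ = μ s₀ := by
        rw [Measure.restrict_apply hs₀0, Set.inter_self]
      rw [h6] at h7
      exact nonpos_iff_eq_zero.mp h7
    have hfin : ∀ᵐ ω ∂μ, h ω ≤ 0 := by
      rw [ae_iff]
      have hset : {ω | ¬ h ω ≤ 0} = s₀ := by
        ext ω; simp [hs₀def, not_le]
      rw [hset]
      exact h5
    filter_upwards [hfin] with ω hω
    simpa using hω

lemma rho_integrable (hM : Martingale M ℱ μ) (t : ℝ) (n : ℕ) :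
    Integrable (fun ω =>
      Real.exp (t * (M (n+1) ω - M n ω) - t ^ 2 / 2 * (M (n+1) ω - M n ω) ^ 2)) μ := by
  have hDmeas : Measurable fun ω => M (n + 1) ω - M n ω :=
    ((hM.stronglyMeasurable (n + 1)).mono (ℱ.le _)).measurable.sub
      ((hM.stronglyMeasurable n).mono (ℱ.le _)).measurable
  apply Integrable.mono' (integrable_const (Real.exp (1/2)))
  · apply Measurable.aestronglyMeasurable
    exact ((hDmeas.const_mul t).sub ((hDmeas.pow_const 2).const_mul (t^2/2))).exp
  · exact ae_of_all _ fun ω => by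
      rw [Real.norm_eq_abs, abs_of_pos (Real.exp_pos _)]
      exact Real.exp_le_exp.2 (exponent_le_half t _)

lemma condexp_exp_le_one (hM : Martingale M ℱ μ)
    (hheavy : Martingale.IsHeavyOnLeft μ ℱ M) {t : ℝ} (ht : 0 ≤ t) (n : ℕ) :
    μ[fun ω => Real.exp (t * (M (n+1) ω - M n ω) - t ^ 2 / 2 * (M (n+1) ω - M n ω) ^ 2)|ℱ n]
      ≤ᵐ[μ] fun _ => 1 := by
  have hDmeas : Measurable fun ω => M (n + 1) ω - M n ω :=
    ((hM.stronglyMeasurable (n + 1)).mono (ℱ.le _)).measurable.sub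
      ((hM.stronglyMeasurable n).mono (ℱ.le _)).measurable
  have hgmeas : AEStronglyMeasurable (fun ω => gfn t (M (n+1) ω - M n ω)) μ :=
    ((measurable_gfn t).comp hDmeas).aestronglyMeasurable
  have hgint : Integrable (fun ω => gfn t (M (n+1) ω - M n ω)) μ := by
    apply Integrable.mono' (integrable_const (1 : ℝ)) hgmeas
    exact ae_of_all _ fun ω => by
      rw [Real.norm_eq_abs]; exact abs_gfn_le_one ht _
  have hρint := rho_integrable hM t n
  have hsum_int : Integrable (fun ω => 1 + gfn t (M (n+1) ω - M n ω)) μ :=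
    (integrable_const (1:ℝ)).add hgint
  have h1 : (fun ω =>
      Real.exp (t * (M (n+1) ω - M n ω) - t ^ 2 / 2 * (M (n+1) ω - M n ω) ^ 2))
      ≤ᵐ[μ] fun ω => 1 + gfn t (M (n+1) ω - M n ω) :=
    ae_of_all _ fun ω => key_pointwise ht _
  have h2 := condExp_mono (m := ℱ n) hρint hsum_int h1
  have h3 : (fun ω => 1 + gfn t (M (n+1) ω - M n ω))
      = (fun _ => (1:ℝ)) + fun ω => gfn t (M (n+1) ω - M n ω) := rfl
  have h4 := condExp_add (m := ℱ n) (μ := μ) (integrable_const (1:ℝ)) hgint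
  have h5 := condexp_gfn_nonpos hM hheavy ht n
  have h6 : μ[fun _ : Ω => (1:ℝ)|ℱ n] = fun _ => (1:ℝ) := condExp_const (ℱ.le n) 1
  filter_upwards [h2, h4, h5] with ω hω2 hω4 hω5
  rw [h3] at hω2
  rw [hω4] at hω2
  simp only [Pi.add_apply, h6] at hω2
  have : (0:ℝ) ≥ (μ[fun ω => gfn t (M (n + 1) ω - M n ω)|ℱ n]) ω := by simpa using hω5
  calc (μ[fun ω => Real.exp (t * (M (n+1) ω - M n ω)
        - t ^ 2 / 2 * (M (n+1) ω - M n ω) ^ 2)|ℱ n]) ω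
      ≤ 1 + (μ[fun ω => gfn t (M (n + 1) ω - M n ω)|ℱ n]) ω := hω2
    _ ≤ 1 := by linarith

end HOLAux

/-- Lemma C.1 (1): for a locally square integrable real martingale `M` with `M 0 = 0` which is
heavy on left, and `W_n(t) = exp(t M_n − (t²/2)[M]_n)`, for every `t ≥ 0`, `(W_n(t))` is a
positive supermartingale with `E[W_n(t)] ≤ 1`. -/
theorem heavyOnLeft_exp_martingale_supermartingale
    {Ω : Type*} {m0 : MeasurableSpace Ω} {μ : Measure Ω} [IsProbabilityMeasure μ]
    {ℱ : Filtration ℕ m0} {M : ℕ → Ω → ℝ}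
    (hM : Martingale M ℱ μ) (hM0 : M 0 = 0) (hMsq : ∀ n, MemLp (M n) 2 μ)
    (hheavy : Martingale.IsHeavyOnLeft μ ℱ M)
    {t : ℝ} (ht : 0 ≤ t)
    (W : ℕ → Ω → ℝ)
    (hW : ∀ n ω, W n ω = Real.exp (t * M n ω - t ^ 2 / 2 *
      ∑ k ∈ Finset.Icc 1 n, (M k ω - M (k - 1) ω) ^ 2)) :
    (∀ n ω, 0 < W n ω) ∧ Supermartingale W ℱ μ ∧ ∀ n, (∫ ω, W n ω ∂μ) ≤ 1 := by
  have hMzero : ∀ ω, M 0 ω = 0 := fun ω => congrFun hM0 ω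
  have hWpos : ∀ n ω, 0 < W n ω := fun n ω => by rw [hW]; exact Real.exp_pos _
  have hW0 : W 0 = fun _ => (1:ℝ) := by
    funext ω
    rw [hW]
    simp [hMzero ω]
  have hWsucc : ∀ n ω, W (n + 1) ω = W n ω *
      Real.exp (t * (M (n + 1) ω - M n ω) - t ^ 2 / 2 * (M (n + 1) ω - M n ω) ^ 2) := by
    intro n ω
    rw [hW, hW, ← Real.exp_add]
    congr 1
    rw [Finset.sum_Icc_succ_top (Nat.le_add_left 1 n)]
    simp only [Nat.add_sub_cancel]
    ring
  have hWbound : ∀ n ω, W n ω ≤ Real.exp (n * (1/2)) := by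
    intro n
    induction n with
    | zero =>
      intro ω
      rw [hW0]
      simp
    | succ n ih =>
      intro ω
      rw [hWsucc]
      have h1 : Real.exp (t * (M (n + 1) ω - M n ω)
          - t ^ 2 / 2 * (M (n + 1) ω - M n ω) ^ 2) ≤ Real.exp (1/2) :=
        Real.exp_le_exp.2 (HOLAux.exponent_le_half t _)
      calc W n ω * Real.exp (t * (M (n + 1) ω - M n ω)
              - t ^ 2 / 2 * (M (n + 1) ω - M n ω) ^ 2)
          ≤ Real.exp (n * (1/2)) * Real.exp (1/2) :=
            mul_le_mul (ih ω) h1 (Real.exp_pos _).le (Real.exp_pos _).le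
        _ = Real.exp ((n + 1 : ℕ) * (1/2)) := by
            rw [← Real.exp_add]; congr 1; push_cast; ring
  have hWmeas : ∀ n, StronglyMeasurable[ℱ n] (W n) := by
    intro n
    have hfun : W n = fun ω => Real.exp (t * M n ω - t ^ 2 / 2 *
        ∑ k ∈ Finset.Icc 1 n, (M k ω - M (k - 1) ω) ^ 2) := funext (hW n)
    rw [hfun]
    apply Measurable.stronglyMeasurable
    apply Measurable.exp
    apply Measurable.sub
    · exact ((hM.stronglyAdapted n).measurable).const_mul t
    · apply Measurable.const_mul
      apply Finset.measurable_sum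
      intro k hk
      have hk' : k ≤ n := (Finset.mem_Icc.mp hk).2
      have hk1 : k - 1 ≤ n := le_trans (Nat.sub_le k 1) hk'
      exact (((hM.stronglyAdapted k).measurable.mono (ℱ.mono hk') le_rfl).sub
        ((hM.stronglyAdapted (k - 1)).measurable.mono (ℱ.mono hk1) le_rfl)).pow_const 2
  have hWint : ∀ n, Integrable (W n) μ := by
    intro n
    apply Integrable.mono' (integrable_const (Real.exp (n * (1/2))))
    · exact ((hWmeas n).mono (ℱ.le n)).aestronglyMeasurable
    · exact ae_of_all _ fun ω => by
        rw [Real.norm_eq_abs, abs_of_pos (hWpos n ω)]; exact hWbound n ω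
  have hstep : ∀ n, μ[W (n + 1)|ℱ n] ≤ᵐ[μ] W n := by
    intro n
    have hfeq : W (n + 1) = W n * fun ω =>
        Real.exp (t * (M (n + 1) ω - M n ω) - t ^ 2 / 2 * (M (n + 1) ω - M n ω) ^ 2) := by
      funext ω; exact hWsucc n ω
    have hρint := HOLAux.rho_integrable hM t n
    have hprod_int : Integrable (W n * fun ω =>
        Real.exp (t * (M (n + 1) ω - M n ω) - t ^ 2 / 2 * (M (n + 1) ω - M n ω) ^ 2)) μ := by
      rw [← hfeq]; exact hWint (n + 1)
    have hmul := condExp_mul_of_stronglyMeasurable_left (hWmeas n) hprod_int hρint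
    have hone := HOLAux.condexp_exp_le_one hM hheavy ht n
    rw [hfeq]
    filter_upwards [hmul, hone] with ω h1 h2
    rw [h1]
    simp only [Pi.mul_apply]
    have h2' : (μ[fun ω => Real.exp (t * (M (n + 1) ω - M n ω)
        - t ^ 2 / 2 * (M (n + 1) ω - M n ω) ^ 2)|ℱ n]) ω ≤ 1 := by simpa using h2
    calc W n ω * (μ[fun ω => Real.exp (t * (M (n + 1) ω - M n ω)
            - t ^ 2 / 2 * (M (n + 1) ω - M n ω) ^ 2)|ℱ n]) ω
        ≤ W n ω * 1 := mul_le_mul_of_nonneg_left h2' (hWpos n ω).le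
      _ = W n ω := mul_one _
  have hsuper : Supermartingale W ℱ μ := supermartingale_nat (fun n => hWmeas n) hWint hstep
  refine ⟨hWpos, hsuper, ?_⟩
  intro n
  induction n with
  | zero =>
    rw [show (fun ω => W 0 ω) = W 0 from rfl]
    rw [hW0]
    simp
  | succ n ih =>
    have h1 : ∫ ω, (μ[W (n + 1)|ℱ n]) ω ∂μ = ∫ ω, W (n + 1) ω ∂μ :=
      integral_condExp (ℱ.le n)
    have h2 : ∫ ω, (μ[W (n + 1)|ℱ n]) ω ∂μ ≤ ∫ ω, W n ω ∂μ :=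
      integral_mono_ae integrable_condExp (hWint n) (hstep n)
    calc ∫ ω, W (n + 1) ω ∂μ = ∫ ω, (μ[W (n + 1)|ℱ n]) ω ∂μ := h1.symm
      _ ≤ ∫ ω, W n ω ∂μ := h2
      _ ≤ 1 := ih
end
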